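/- arXiv:1307.4450 — 5 statements merged into one kernel-verified Lean document; each statement's English description precedes it below -/
import Mathlib

section
/- Let 0 < λ < ∞ and μ > 0. Let (η_i)_{i≥0} be i.i.d. ℕ-valued integrable random variables with mean μ, and let (Y_i)_{i≥0} be i.i.d. Bernoulli(λ/(1+λ)) random variables, independent of (η_i). Let N be the reflected (Lindley) recursion driven by ξ_i = η_i − Y_i. Then: (i) if μ < λ/(1+λ), the sequence (N_L)_{L≥0} converges in distribution to an almost surely finite random variable, in particular it is tight; (ii) if μ = λ/(1+λ), then N_L → ∞ in probability as L → ∞; (iii) if μ > λ/(1+λ), then P[N_L ≥ (μ − λ/(1+λ))L/2] → 1 as L → ∞. (This is the probabilistic content of the theorem that the one-dimensional totally asymmetric activated random walk has critical density μ_c = λ/(1+λ) and does not fixate at criticality.) -/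
open MeasureTheory ProbabilityTheory Filter Topology

namespace ARWAux

/-- The Lindley recursion functional on a sequence of increments. -/
def lind (x : ℕ → ℝ) : ℕ → ℝ
  | 0 => 0
  | n + 1 => max (lind x n + x n) 0

/-- The prefix-maximum functional: `pmax x n = max_{0 ≤ m ≤ n} ∑_{i<m} x i`. -/
def pmax (x : ℕ → ℝ) : ℕ → ℝ
  | 0 => 0
  | n + 1 => max 0 (x 0 + pmax (fun k => x (k + 1)) n)

lemma pmax_zero (x : ℕ → ℝ) : pmax x 0 = 0 := rfl

lemma pmax_succ (x : ℕ → ℝ) (n : ℕ) :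
    pmax x (n + 1) = max 0 (x 0 + pmax (fun k => x (k + 1)) n) := rfl

lemma pmax_nonneg (x : ℕ → ℝ) (n : ℕ) : 0 ≤ pmax x n := by
  cases n <;> simp [pmax]

lemma pmax_congr : ∀ (n : ℕ) (x y : ℕ → ℝ), (∀ i < n, x i = y i) → pmax x n = pmax y n := by
  intro n
  induction n with
  | zero => intro x y _; rfl
  | succ n ih =>
      intro x y h
      rw [pmax_succ, pmax_succ, h 0 (Nat.succ_pos n),
        ih (fun k => x (k + 1)) (fun k => y (k + 1)) (fun i hi => h (i + 1) (by omega))]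

lemma lind_eq_pmax_rev (x : ℕ → ℝ) : ∀ n, lind x n = pmax (fun i => x (n - 1 - i)) n := by
  intro n
  induction n with
  | zero => rfl
  | succ n ih =>
      show max (lind x n + x n) 0 = _
      rw [pmax_succ]
      have h1 : x (n + 1 - 1 - 0) = x n := by norm_num
      have h2 : pmax (fun k => x (n + 1 - 1 - (k + 1))) n = lind x n := by
        rw [ih]
        exact pmax_congr n _ _ (fun i hi => by congr 1; omega)
      rw [h1, h2, max_comm, add_comm]

lemma le_pmax : ∀ (n : ℕ) (x : ℕ → ℝ) (m : ℕ), m ≤ n →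
    (∑ i ∈ Finset.range m, x i) ≤ pmax x n := by
  intro n
  induction n with
  | zero => intro x m hm; interval_cases m <;> simp [pmax]
  | succ n ih =>
      intro x m hm
      match m with
      | 0 => simpa using pmax_nonneg x (n + 1)
      | m + 1 =>
          rw [Finset.sum_range_succ', pmax_succ]
          refine le_max_of_le_right ?_
          rw [add_comm]
          exact add_le_add_right (ih _ m (by omega)) _

lemma pmax_exists : ∀ (n : ℕ) (x : ℕ → ℝ), ∃ m ≤ n, pmax x n = ∑ i ∈ Finset.range m, x i := by
  intro n
  induction n with
  | zero => intro x; exact ⟨0, le_refl 0, by simp [pmax]⟩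
  | succ n ih =>
      intro x
      rcases le_or_gt (x 0 + pmax (fun k => x (k + 1)) n) 0 with h | h
      · exact ⟨0, by omega, by rw [pmax_succ, max_eq_left h]; simp⟩
      · obtain ⟨m, hm, heq⟩ := ih (fun k => x (k + 1))
        refine ⟨m + 1, by omega, ?_⟩
        rw [pmax_succ, max_eq_right h.le, Finset.sum_range_succ', heq, add_comm]

lemma pmax_mono (x : ℕ → ℝ) : Monotone (pmax x) := by
  apply monotone_nat_of_le_succ
  intro n
  obtain ⟨m, hm, heq⟩ := pmax_exists n x
  rw [heq]
  exact le_pmax (n + 1) x m (by omega)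

lemma pmax_int : ∀ (n : ℕ) (x : ℕ → ℝ), (∀ i, ∃ z : ℤ, x i = z) → ∃ k : ℕ, pmax x n = k := by
  intro n
  induction n with
  | zero => intro x _; exact ⟨0, by simp [pmax]⟩
  | succ n ih =>
      intro x hx
      obtain ⟨z, hz⟩ := hx 0
      obtain ⟨k, hk⟩ := ih (fun i => x (i + 1)) (fun i => hx (i + 1))
      refine ⟨(z + k).toNat, ?_⟩
      rw [pmax_succ, hz, hk]
      have : ((z + (k : ℤ)).toNat : ℝ) = max ((z + (k : ℤ) : ℤ) : ℝ) 0 := by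
        rw [← Int.cast_natCast, Int.toNat_eq_max, Int.cast_max]; norm_num
      rw [this]
      push_cast
      rw [max_comm]

lemma measurable_pmax {α : Type*} [MeasurableSpace α] :
    ∀ (n : ℕ) (x : ℕ → α → ℝ), (∀ i, Measurable (x i)) →
      Measurable (fun a => pmax (fun i => x i a) n) := by
  intro n
  induction n with
  | zero => intro x hx; simp only [pmax]; exact measurable_const
  | succ n ih =>
      intro x hx
      simp only [pmax_succ]
      exact measurable_const.max ((hx 0).add (ih (fun i => x (i + 1)) (fun i => hx (i + 1))))



/-- A measure on ℕ is determined by its values on singletons. -/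
lemma measure_nat_ext {μ ν : Measure ℕ} (h : ∀ n, μ {n} = ν {n}) : μ = ν := by
  ext s hs
  have hbi : ∀ (ρ : Measure ℕ), ρ s = ∑' n : s, ρ {(n : ℕ)} := by
    intro ρ
    have hset : s = ⋃ n ∈ s, {n} := by simp
    nth_rewrite 1 [hset]
    rw [measure_biUnion s.to_countable (fun n _ m _ hnm => by
      simp [Function.onFun, Set.disjoint_singleton, hnm]) (fun n _ => measurableSet_singleton n)]
  rw [hbi μ, hbi ν]
  exact tsum_congr fun n => h n

/-- The joint law of finitely many members of an independent family is the product
of the marginal laws. -/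
lemma map_vec_pi {Ω : Type*} [MeasureSpace Ω] [IsProbabilityMeasure (ℙ : Measure Ω)]
    {ι β : Type*} [MeasurableSpace β] {Z : ι → Ω → β}
    (hindep : iIndepFun Z ℙ)
    (hmeas : ∀ i, Measurable (Z i))
    {κ : Type*} [Fintype κ] (c : κ → ι) (hc : Function.Injective c) :
    Measure.map (fun ω (k : κ) => Z (c k) ω) ℙ
      = Measure.pi (fun k => Measure.map (Z (c k)) ℙ) := by
  classical
  haveI : ∀ k : κ, IsProbabilityMeasure (Measure.map (Z (c k)) ℙ) :=
    fun k => Measure.isProbabilityMeasure_map (hmeas (c k)).aemeasurable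
  refine (Measure.pi_eq fun s hs => ?_).symm
  rw [Measure.map_apply (measurable_pi_lambda _ fun k => hmeas (c k))
    (MeasurableSet.univ_pi hs)]
  have hpre : (fun ω (k : κ) => Z (c k) ω) ⁻¹' Set.pi Set.univ s
      = ⋂ k, Z (c k) ⁻¹' s k := by
    ext ω; simp [Set.mem_univ_pi]
  -- assign sets to indices in the range of c
  set sets : ι → Set β := fun i => if h : ∃ k, c k = i then s h.choose else Set.univ with hsets
  have hsets_c : ∀ k, sets (c k) = s k := by
    intro k
    have h : ∃ k', c k' = c k := ⟨k, rfl⟩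
    simp only [hsets, dif_pos h]
    exact congrArg s (hc h.choose_spec)
  have hSmeas : ∀ i ∈ Finset.univ.image c, MeasurableSet (sets i) := by
    intro i hi
    simp only [Finset.mem_image] at hi
    obtain ⟨k, _, rfl⟩ := hi
    rw [hsets_c]; exact hs k
  have hinter : (⋂ i ∈ Finset.univ.image c, Z i ⁻¹' sets i) = ⋂ k, Z (c k) ⁻¹' s k := by
    ext ω
    simp only [Set.mem_iInter, Finset.mem_image, Finset.mem_univ, true_and]
    constructor
    · intro h k
      have := h (c k) ⟨k, rfl⟩
      rwa [hsets_c] at this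
    · rintro h i ⟨k, rfl⟩
      rw [hsets_c]; exact h k
  have := hindep.measure_inter_preimage_eq_mul (Finset.univ.image c) hSmeas
  rw [hinter] at this
  rw [hpre, this, Finset.prod_image (fun k _ k' _ h => hc h)]
  refine Finset.prod_congr rfl fun k _ => ?_
  rw [hsets_c, Measure.map_apply (hmeas (c k)) (hs k)]


lemma exp_taylor_quad {u : ℝ} (hu : |u| ≤ 1) : Real.exp u - 1 - u ≤ u ^ 2 := by
  have h := Real.exp_bound hu (by norm_num : 0 < 2)
  have hsum : ∑ i ∈ Finset.range 2, u ^ i / (Nat.factorial i : ℝ) = 1 + u := by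
    rw [Finset.sum_range_succ, Finset.sum_range_one]
    norm_num [Nat.factorial]
  rw [hsum] at h
  have h2 : Real.exp u - (1 + u) ≤ |Real.exp u - (1 + u)| := le_abs_self _
  have h3 : |u| ^ 2 * ((Nat.succ 2 : ℝ) / ((Nat.factorial 2 : ℝ) * 2)) ≤ u ^ 2 := by
    rw [sq_abs]
    have : ((Nat.succ 2 : ℝ) / ((Nat.factorial 2 : ℝ) * 2)) = 3 / 4 := by
      norm_num [Nat.factorial]
    rw [this]
    nlinarith [sq_nonneg u]
  linarith

end ARWAux

open ARWAux


set_option maxHeartbeats 2000000 in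
/-- **Critical behavior of the one-dimensional totally asymmetric activated random walk**
(probabilistic content: the reflected random walk driven by `ξ_i = η_i − Y_i`).

Let `0 < λ` (finite) and `μ > 0`.  Let `(η_i)` be i.i.d. ℕ-valued integrable random variables
with mean `μ`, and `(Y_i)` i.i.d. Bernoulli(`λ/(1+λ)`) random variables, the whole family
`(η_i)_i ∪ (Y_i)_i` being mutually independent.  Let `N` be the reflected (Lindley) recursion
driven by `ξ_i = η_i − Y_i`:  `N₀ = max(ξ₀,0)`, `N_{i+1} = max(N_i + ξ_{i+1}, 0)`.  Then:
(i) if `μ < λ/(1+λ)`, `(N_L)` converges in distribution to an a.s. finite random variable,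
    and in particular is tight;
(ii) if `μ = λ/(1+λ)`, `N_L → ∞` in probability;
(iii) if `μ > λ/(1+λ)`, `P[N_L ≥ (μ − λ/(1+λ))L/2] → 1`. -/
theorem arw_totally_asymmetric_critical
    {Ω : Type*} [MeasureSpace Ω] [IsProbabilityMeasure (ℙ : Measure Ω)]
    (lam mu : ℝ) (hlam : 0 < lam) (hmu : 0 < mu)
    (η Y : ℕ → Ω → ℕ)
    (hηmeas : ∀ i, Measurable (η i)) (hYmeas : ∀ i, Measurable (Y i))
    -- joint independence of the whole family (η_i)_i ∪ (Y_i)_i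
    (hindep : iIndepFun (Sum.elim η Y : ℕ ⊕ ℕ → Ω → ℕ) ℙ)
    -- (η_i) identically distributed, integrable, with mean μ
    (hηident : ∀ i, IdentDistrib (η i) (η 0) ℙ ℙ)
    (hηint : Integrable (fun ω => (η 0 ω : ℝ)) ℙ)
    (hηmean : ∫ ω, (η 0 ω : ℝ) ∂ℙ = mu)
    -- (Y_i) i.i.d. Bernoulli(λ/(1+λ))
    (hY01 : ∀ i ω, Y i ω ≤ 1)
    (hYdist : ∀ i, ℙ {ω | Y i ω = 1} = ENNReal.ofReal (lam / (1 + lam)))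
    -- the Lindley recursion driven by ξ_i = η_i − Y_i
    (N : ℕ → Ω → ℝ)
    (hN0 : ∀ ω, N 0 ω = max ((η 0 ω : ℝ) - (Y 0 ω : ℝ)) 0)
    (hNrec : ∀ i ω, N (i + 1) ω = max (N i ω + ((η (i+1) ω : ℝ) - (Y (i+1) ω : ℝ))) 0) :
    -- (i) subcritical: convergence in distribution to an a.s. finite limit, hence tightness
    (mu < lam / (1 + lam) →
      (∃ W : Ω → ℝ, Measurable W ∧
        ∀ f : BoundedContinuousFunction ℝ ℝ,
          Tendsto (fun L : ℕ => ∫ ω, f (N L ω) ∂ℙ) atTop (𝓝 (∫ ω, f (W ω) ∂ℙ)))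
      ∧ ∀ δ : ℝ, 0 < δ → ∃ K : ℝ, ∀ L : ℕ, ℙ {ω | K < |N L ω|} < ENNReal.ofReal δ)
    ∧
    -- (ii) critical: N_L → ∞ in probability
    (mu = lam / (1 + lam) →
      ∀ K : ℝ, Tendsto (fun L : ℕ => ℙ {ω | N L ω ≤ K}) atTop (𝓝 0))
    ∧
    -- (iii) supercritical
    (lam / (1 + lam) < mu →
      Tendsto (fun L : ℕ => ℙ {ω | (mu - lam / (1 + lam)) * L / 2 ≤ N L ω}) atTop (𝓝 1)) := by
  classical
  have hcastmeas : Measurable (Nat.cast : ℕ → ℝ) := measurable_of_countable _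
  set p : ℝ := lam / (1 + lam) with hp_def
  have hlam1 : 0 < 1 + lam := by linarith
  have hp0 : 0 < p := div_pos hlam hlam1
  have hp1 : p < 1 := (div_lt_one hlam1).2 (by linarith)
  -- the increments
  set ξ : ℕ → Ω → ℝ := fun i ω => (η i ω : ℝ) - (Y i ω : ℝ) with hξ_def
  have hξmeas : ∀ i, Measurable (ξ i) :=
    fun i => (hcastmeas.comp (hηmeas i)).sub (hcastmeas.comp (hYmeas i))
  have hξlb : ∀ i ω, (-1 : ℝ) ≤ ξ i ω := by
    intro i ω
    have h1 : ((Y i ω : ℝ)) ≤ 1 := by exact_mod_cast hY01 i ω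
    have h2 : (0 : ℝ) ≤ (η i ω : ℝ) := Nat.cast_nonneg _
    simp only [hξ_def]; linarith
  have hξint_val : ∀ i ω, ∃ z : ℤ, ξ i ω = z := by
    intro i ω
    exact ⟨(η i ω : ℤ) - (Y i ω : ℤ), by push_cast [hξ_def]; ring⟩
  -- the running prefix maxima of the random walk
  set M : ℕ → Ω → ℝ := fun n ω => pmax (fun i => ξ i ω) n with hM_def
  have hMmeas : ∀ n, Measurable (M n) := fun n => measurable_pmax n ξ hξmeas
  have hMnonneg : ∀ n ω, 0 ≤ M n ω := fun n ω => pmax_nonneg _ n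
  have hMmono : ∀ ω, Monotone (fun n => M n ω) := fun ω => pmax_mono _
  -- the whole family
  set Z : ℕ ⊕ ℕ → Ω → ℕ := Sum.elim η Y with hZ_def
  have hZmeas : ∀ s, Measurable (Z s) := by
    intro s; cases s with
    | inl i => exact hηmeas i
    | inr i => exact hYmeas i
  -- law of the Bernoulli variables
  have hYpre : ∀ i, {ω | Y i ω = 1} = Y i ⁻¹' {1} := fun i => rfl
  have hYcompl : ∀ i, Y i ⁻¹' {0} = (Y i ⁻¹' {1})ᶜ := by
    intro i
    ext ω
    have := hY01 i ω
    simp only [Set.mem_preimage, Set.mem_singleton_iff, Set.mem_compl_iff]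
    omega
  have hYlaw : ∀ i, Measure.map (Y i) ℙ = Measure.map (Y 0) ℙ := by
    intro i
    apply measure_nat_ext
    intro n
    have haux : ∀ j, Measure.map (Y j) ℙ {n} = ℙ (Y j ⁻¹' {n}) :=
      fun j => Measure.map_apply (hYmeas j) (measurableSet_singleton n)
    rw [haux i, haux 0]
    match n with
    | 0 =>
        rw [hYcompl i, hYcompl 0, measure_compl (hYmeas i (measurableSet_singleton 1)) (measure_ne_top _ _),
          measure_compl (hYmeas 0 (measurableSet_singleton 1)) (measure_ne_top _ _)]
        rw [← hYpre i, ← hYpre 0, hYdist i, hYdist 0]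
    | 1 => rw [← hYpre i, ← hYpre 0, hYdist i, hYdist 0]
    | (n+2) =>
        have h1 : ∀ j : ℕ, Y j ⁻¹' {n+2} = ∅ := by
          intro j
          apply Set.eq_empty_iff_forall_notMem.2
          intro ω hω
          simp only [Set.mem_preimage, Set.mem_singleton_iff] at hω
          have := hY01 j ω
          omega
        simp [h1 i, h1 0]
  -- the key identical-distribution lemma
  have keyIdent : ∀ (n : ℕ) (a b : Fin n → ℕ), Function.Injective a → Function.Injective b →
      ∀ {G : (Fin n → ℝ) → ℝ}, Measurable G →
      IdentDistrib (fun ω => G fun k => ξ (a k) ω) (fun ω => G fun k => ξ (b k) ω) ℙ ℙ := by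
    intro n a b ha hb G hG
    set Φ : ((Fin n × Bool) → ℕ) → (Fin n → ℝ) :=
      fun w k => (w (k, true) : ℝ) - (w (k, false) : ℝ) with hΦ_def
    have hΦmeas : Measurable Φ := by
      apply measurable_pi_lambda
      intro k
      exact (hcastmeas.comp (measurable_pi_apply (k, true))).sub
        (hcastmeas.comp (measurable_pi_apply (k, false)))
    have hmapvec : ∀ (c : Fin n → ℕ), Function.Injective c →
        Measure.map (fun ω (k : Fin n) => ξ (c k) ω) ℙ
          = Measure.map Φ (Measure.pi (fun q : Fin n × Bool =>
              cond q.2 (Measure.map (η 0) ℙ) (Measure.map (Y 0) ℙ))) := by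
      intro c hc
      set d : Fin n × Bool → ℕ ⊕ ℕ := fun q => cond q.2 (Sum.inl (c q.1)) (Sum.inr (c q.1))
        with hd_def
      have hd : Function.Injective d := by
        rintro ⟨k, bk⟩ ⟨l, bl⟩ h
        simp only [hd_def] at h
        cases bk <;> cases bl
        · obtain rfl : k = l := hc (Sum.inr.inj h); rfl
        · exact absurd h (by simp)
        · exact absurd h (by simp)
        · obtain rfl : k = l := hc (Sum.inl.inj h); rfl
      have hvec : (fun ω (k : Fin n) => ξ (c k) ω)
          = Φ ∘ (fun ω (q : Fin n × Bool) => Z (d q) ω) := by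
        funext ω
        simp only [Function.comp_apply, hΦ_def, hd_def, hZ_def]
        funext k
        simp [hξ_def]
      rw [hvec, ← Measure.map_map hΦmeas (measurable_pi_lambda _ fun q => hZmeas (d q))]
      rw [map_vec_pi hindep hZmeas d hd]
      have hmarg : (fun q : Fin n × Bool => Measure.map (Z (d q)) ℙ)
          = fun q : Fin n × Bool => cond q.2 (Measure.map (η 0) ℙ) (Measure.map (Y 0) ℙ) := by
        funext q
        rcases q with ⟨k, b⟩
        cases b
        · exact hYlaw (c k)
        · exact (hηident (c k)).map_eq
      rw [hmarg]
    have hveca : Measurable (fun ω (k : Fin n) => ξ (a k) ω) :=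
      measurable_pi_lambda _ fun k => hξmeas (a k)
    have hvecb : Measurable (fun ω (k : Fin n) => ξ (b k) ω) :=
      measurable_pi_lambda _ fun k => hξmeas (b k)
    refine ⟨(hG.comp hveca).aemeasurable, (hG.comp hvecb).aemeasurable, ?_⟩
    have ea : (fun ω => G fun k => ξ (a k) ω) = G ∘ (fun ω (k : Fin n) => ξ (a k) ω) := rfl
    have eb : (fun ω => G fun k => ξ (b k) ω) = G ∘ (fun ω (k : Fin n) => ξ (b k) ω) := rfl
    rw [ea, eb, ← Measure.map_map hG hveca, ← Measure.map_map hG hvecb, hmapvec a ha, hmapvec b hb]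
  -- the functional on finite vectors
  set Gf : ∀ n : ℕ, (Fin n → ℝ) → ℝ :=
    fun n v => pmax (fun i => if h : i < n then v ⟨i, h⟩ else 0) n with hGf_def
  have hGfmeas : ∀ n, Measurable (Gf n) := by
    intro n
    apply measurable_pmax
    intro i
    by_cases h : i < n
    · simpa only [dif_pos h] using measurable_pi_apply (⟨i, h⟩ : Fin n)
    · simpa only [dif_neg h] using measurable_const
  have hGf_eval : ∀ (n : ℕ) (x : ℕ → ℝ), Gf n (fun k : Fin n => x k) = pmax x n := by
    intro n x
    apply pmax_congr
    intro i hi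
    simp [hGf_def, dif_pos hi]
  -- identical distribution of each increment
  have hξident : ∀ i, IdentDistrib (ξ i) (ξ 0) ℙ ℙ := by
    intro i
    have := keyIdent 1 (fun _ => i) (fun _ => 0)
      (fun x y _ => Subsingleton.elim x y) (fun x y _ => Subsingleton.elim x y)
      (G := fun v => v 0) (measurable_pi_apply 0)
    simpa using this
  -- shift invariance of the prefix maximum
  have hMshift : ∀ (s n : ℕ), IdentDistrib (fun ω => pmax (fun k => ξ (k + s) ω) n) (M n) ℙ ℙ := by
    intro s n
    have h := keyIdent n (fun k => (k : ℕ) + s) (fun k => (k : ℕ))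
      (fun x y h => by
        have h' : (x : ℕ) + s = (y : ℕ) + s := h
        exact Fin.ext (by omega))
      (fun x y h => by
        have h' : (x : ℕ) = (y : ℕ) := h
        exact Fin.ext h') (hGfmeas n)
    have e1 : (fun ω => Gf n (fun k : Fin n => ξ ((k : ℕ) + s) ω))
        = fun ω => pmax (fun k => ξ (k + s) ω) n := by
      funext ω; exact hGf_eval n (fun i => ξ (i + s) ω)
    have e2 : (fun ω => Gf n (fun k : Fin n => ξ (k : ℕ) ω)) = M n := by
      funext ω; exact hGf_eval n (fun i => ξ i ω)
    rwa [e1, e2] at h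
  -- duality : N L is distributed as M (L+1)
  have hNval : ∀ (L : ℕ) (ω : Ω), N L ω = lind (fun i => ξ i ω) (L + 1) := by
    intro L
    induction L with
    | zero =>
        intro ω
        have h1 : lind (fun i => ξ i ω) 1 = max (ξ 0 ω) 0 := by
          show max (0 + ξ 0 ω) 0 = _
          rw [zero_add]
        rw [h1, hN0 ω]
    | succ L ih =>
        intro ω
        show N (L+1) ω = max (lind (fun i => ξ i ω) (L+1) + ξ (L+1) ω) 0
        rw [hNrec L ω, ih ω]
  have hNM : ∀ L, IdentDistrib (N L) (M (L + 1)) ℙ ℙ := by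
    intro L
    have hrev : ∀ ω, N L ω = Gf (L+1) (fun k : Fin (L+1) => ξ (L - (k : ℕ)) ω) := by
      intro ω
      rw [hNval L ω, lind_eq_pmax_rev]
      rw [hGf_eval (L+1) (fun i => ξ (L - i) ω)]
      apply pmax_congr
      intro i hi
      have hsub : L + 1 - 1 - i = L - i := by omega
      rw [hsub]
    have h := keyIdent (L+1) (fun k => L - (k : ℕ)) (fun k => (k : ℕ))
      (fun x y h => by
        have h' : L - (x : ℕ) = L - (y : ℕ) := h
        have hx := x.isLt; have hy := y.isLt
        apply Fin.ext; omega)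
      (fun x y h => by
        have h' : (x : ℕ) = (y : ℕ) := h
        exact Fin.ext h') (hGfmeas (L+1))
    have e2 : (fun ω => Gf (L+1) (fun k : Fin (L+1) => ξ (k : ℕ) ω)) = M (L+1) := by
      funext ω; exact hGf_eval (L+1) (fun i => ξ i ω)
    rw [e2] at h
    have e1 : (fun ω => Gf (L+1) (fun k : Fin (L+1) => ξ (L - (k : ℕ)) ω)) = N L := by
      funext ω; exact (hrev ω).symm
    rwa [e1] at h
  -- N is nonnegative
  have hNnonneg : ∀ L ω, 0 ≤ N L ω := by
    intro L ω
    cases L with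
    | zero => rw [hN0 ω]; exact le_max_right _ _
    | succ i => rw [hNrec i ω]; exact le_max_right _ _
  have hNmeas : ∀ L, Measurable (N L) := by
    intro L
    induction L with
    | zero =>
        have : N 0 = fun ω => max ((η 0 ω : ℝ) - (Y 0 ω : ℝ)) 0 := funext hN0
        rw [this]
        exact ((hcastmeas.comp (hηmeas 0)).sub (hcastmeas.comp (hYmeas 0))).max measurable_const
    | succ i ih =>
        have : N (i+1) = fun ω => max (N i ω + ((η (i+1) ω : ℝ) - (Y (i+1) ω : ℝ))) 0 :=
          funext (hNrec i)
        rw [this]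
        exact (ih.add ((hcastmeas.comp (hηmeas (i+1))).sub (hcastmeas.comp (hYmeas (i+1))))).max
          measurable_const
  -- integrability of increments
  have hYreal_int : ∀ i, Integrable (fun ω => (Y i ω : ℝ)) ℙ := by
    intro i
    refine ⟨(hcastmeas.comp (hYmeas i)).aestronglyMeasurable, ?_⟩
    apply HasFiniteIntegral.of_bounded (C := 1)
    filter_upwards with ω
    rw [Real.norm_eq_abs, abs_of_nonneg (Nat.cast_nonneg _)]
    exact_mod_cast hY01 i ω
  have hξ0int : Integrable (ξ 0) ℙ := hηint.sub (hYreal_int 0)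
  have hξint : ∀ i, Integrable (ξ i) ℙ := fun i => (hξident i).integrable_iff.2 hξ0int
  -- mean of the increments
  have hYmean : ∫ ω, (Y 0 ω : ℝ) ∂ℙ = p := by
    have hind : (fun ω => (Y 0 ω : ℝ)) = fun ω => Set.indicator (Y 0 ⁻¹' {1}) 1 ω := by
      funext ω
      by_cases h : Y 0 ω = 1
      · simp [Set.indicator_of_mem, h, Set.mem_preimage]
      · have h0 : Y 0 ω = 0 := by have := hY01 0 ω; omega
        rw [Set.indicator_of_notMem (by simpa [Set.mem_preimage] using h)]
        simp [h0]
    rw [hind, integral_indicator_one (hYmeas 0 (measurableSet_singleton 1)), ← hYpre 0, measureReal_def, hYdist 0,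
      ENNReal.toReal_ofReal hp0.le]
  have hξmean : ∫ ω, ξ 0 ω ∂ℙ = mu - p := by
    rw [hξ_def]
    simp only
    rw [integral_sub hηint (hYreal_int 0), hηmean, hYmean]
  -- pairwise independence of increments
  have hξpair : Pairwise fun i j => IndepFun (ξ i) (ξ j) ℙ := by
    intro i j hij
    have h := hindep.indepFun_prodMk_prodMk hZmeas (Sum.inl i) (Sum.inr i) (Sum.inl j)
      (Sum.inr j) (by simp [hij]) (by simp) (by simp) (by simp [hij])
    have hg : Measurable (fun q : ℕ × ℕ => (q.1 : ℝ) - (q.2 : ℝ)) := measurable_of_countable _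
    exact h.comp hg hg
  -- strong law of large numbers for the walk
  have hslln : ∀ᵐ ω ∂ℙ, Tendsto (fun n : ℕ => (∑ i ∈ Finset.range n, ξ i ω) / n)
      atTop (𝓝 (mu - p)) := by
    have := strong_law_ae_real ξ hξ0int (fun i j hij => hξpair hij) hξident
    rwa [hξmean] at this
  -- independence of ξ 0 from the shifted prefix maximum
  have hblock : ∀ n : ℕ, IndepFun (ξ 0) (fun ω => pmax (fun k => ξ (k + 1) ω) n) ℙ := by
    intro n
    set S : Finset (ℕ ⊕ ℕ) := {Sum.inl 0, Sum.inr 0} with hS_def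
    set T : Finset (ℕ ⊕ ℕ) :=
      (Finset.range n).image (fun k => Sum.inl (k+1)) ∪
      (Finset.range n).image (fun k => Sum.inr (k+1)) with hT_def
    have hST : Disjoint S T := by
      rw [Finset.disjoint_left]
      intro x hxS hxT
      simp only [hS_def, Finset.mem_insert, Finset.mem_singleton] at hxS
      simp only [hT_def, Finset.mem_union, Finset.mem_image, Finset.mem_range] at hxT
      rcases hxS with rfl | rfl <;> rcases hxT with ⟨k, _, hk⟩ | ⟨k, _, hk⟩ <;> simp_all
    have hmemS1 : Sum.inl 0 ∈ S := by simp [hS_def]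
    have hmemS2 : Sum.inr 0 ∈ S := by simp [hS_def]
    have hmemT1 : ∀ k < n, Sum.inl (k+1) ∈ T := by
      intro k hk; simp only [hT_def, Finset.mem_union, Finset.mem_image, Finset.mem_range]
      exact Or.inl ⟨k, hk, rfl⟩
    have hmemT2 : ∀ k < n, Sum.inr (k+1) ∈ T := by
      intro k hk; simp only [hT_def, Finset.mem_union, Finset.mem_image, Finset.mem_range]
      exact Or.inr ⟨k, hk, rfl⟩
    set g1 : ((i : S) → ℕ) → ℝ :=
      fun v => (v ⟨Sum.inl 0, hmemS1⟩ : ℝ) - (v ⟨Sum.inr 0, hmemS2⟩ : ℝ) with hg1_def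
    have hg1meas : Measurable g1 :=
      (hcastmeas.comp (measurable_pi_apply _)).sub (hcastmeas.comp (measurable_pi_apply _))
    set g2 : ((i : T) → ℕ) → ℝ :=
      fun w => pmax (fun k =>
        if h : k < n then (w ⟨Sum.inl (k+1), hmemT1 k h⟩ : ℝ) - (w ⟨Sum.inr (k+1), hmemT2 k h⟩ : ℝ)
        else 0) n with hg2_def
    have hg2meas : Measurable g2 := by
      apply measurable_pmax
      intro k
      by_cases h : k < n
      · simp only [dif_pos h]
        exact (hcastmeas.comp (measurable_pi_apply _)).sub (hcastmeas.comp (measurable_pi_apply _))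
      · simp only [dif_neg h]; exact measurable_const
    have h := (hindep.indepFun_finset S T hST hZmeas).comp hg1meas hg2meas
    have e1 : g1 ∘ (fun ω (i : S) => Z i ω) = ξ 0 := by
      funext ω; simp [hg1_def, hZ_def, hξ_def]
    have e2 : g2 ∘ (fun ω (i : T) => Z i ω) = fun ω => pmax (fun k => ξ (k + 1) ω) n := by
      funext ω
      show g2 (fun i : T => Z i ω) = _
      simp only [hg2_def]
      apply pmax_congr
      intro i hi
      simp only [dif_pos hi, hZ_def, hξ_def]
      rfl
    rwa [e1, e2] at h
  refine ⟨?_, ?_, ?_⟩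
  · -- part (i)
    intro hlt
    have hc : mu - p < 0 := by linarith
    -- the walk tends to -∞ a.s.; M converges a.s. to its supremum W
    set W : Ω → ℝ := fun ω => ⨆ n, M n ω with hW_def
    have hWmeas : Measurable W := Measurable.iSup hMmeas
    have hae : ∀ᵐ ω ∂ℙ, Tendsto (fun L => M L ω) atTop (𝓝 (W ω)) ∧ ∀ L, M L ω ≤ W ω := by
      filter_upwards [hslln] with ω hω
      have h2 : ∀ᶠ n : ℕ in atTop,
          (∑ i ∈ Finset.range n, ξ i ω) / n ≤ (mu - p) / 2 :=
        hω.eventually (eventually_le_nhds (by linarith))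
      have h2' : ∀ᶠ n : ℕ in atTop, (∑ i ∈ Finset.range n, ξ i ω) ≤ 0 := by
        filter_upwards [h2, eventually_gt_atTop 0] with n hn hn0
        have hpos : (0:ℝ) < (n : ℝ) := by positivity
        have := (div_le_iff₀ hpos).1 hn
        nlinarith
      obtain ⟨n₀, hn₀⟩ := eventually_atTop.1 h2'
      have hle : ∀ m, M m ω ≤ M n₀ ω := by
        intro m
        show pmax (fun i => ξ i ω) m ≤ pmax (fun i => ξ i ω) n₀
        obtain ⟨k, hk, heq⟩ := pmax_exists m (fun i => ξ i ω)
        rcases le_or_gt k n₀ with h | h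
        · rw [heq]; exact le_pmax n₀ _ k h
        · rw [heq]
          exact le_trans (hn₀ k h.le) (hMnonneg n₀ ω)
      have hWω : W ω = M n₀ ω := by
        refine le_antisymm (ciSup_le hle) (le_ciSup ⟨M n₀ ω, ?_⟩ n₀)
        rintro x ⟨m, rfl⟩
        exact hle m
      constructor
      · rw [hWω]
        apply tendsto_atTop_of_eventually_const (i₀ := n₀)
        intro L hL
        exact le_antisymm (hle L) (hMmono ω hL)
      · intro L
        rw [hWω]
        exact hle L
    constructor
    · refine ⟨W, hWmeas, fun f => ?_⟩
      have heq : ∀ L, ∫ ω, f (N L ω) ∂ℙ = ∫ ω, f (M (L+1) ω) ∂ℙ :=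
        fun L => ((hNM L).comp f.continuous.measurable).integral_eq
      have hDCT : Tendsto (fun L => ∫ ω, f (M L ω) ∂ℙ) atTop (𝓝 (∫ ω, f (W ω) ∂ℙ)) := by
        apply tendsto_integral_of_dominated_convergence (bound := fun _ => ‖f‖)
        · exact fun L => (f.continuous.measurable.comp (hMmeas L)).aestronglyMeasurable
        · exact integrable_const _
        · intro L
          filter_upwards with ω
          exact f.norm_coe_le_norm _
        · filter_upwards [hae] with ω hω
          exact (f.continuous.tendsto (W ω)).comp hω.1
      have := hDCT.comp (tendsto_add_atTop_nat 1)
      simp only [Function.comp_def] at this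
      have heq2 : (fun L => ∫ ω, f (N L ω) ∂ℙ) = fun L => ∫ ω, f (M (L+1) ω) ∂ℙ :=
        funext heq
      rw [heq2]
      exact this
    · intro δ hδ
      have hBtend : Tendsto (fun k : ℕ => ℙ {ω | (k:ℝ) < W ω}) atTop (𝓝 0) := by
        have hiter : ⋂ k : ℕ, {ω | (k:ℝ) < W ω} = ∅ := by
          apply Set.eq_empty_iff_forall_notMem.2
          intro ω hω
          obtain ⟨k, hk⟩ := exists_nat_gt (W ω)
          exact absurd (Set.mem_iInter.1 hω k) (by simp only [Set.mem_setOf_eq, not_lt]; exact hk.le)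
        have h := tendsto_measure_iInter_atTop (μ := ℙ)
          (s := fun k : ℕ => {ω | (k:ℝ) < W ω})
          (fun k => (hWmeas measurableSet_Ioi).nullMeasurableSet)
          (fun k k' hkk' => by
            intro ω hω
            simp only [Set.mem_setOf_eq] at hω ⊢
            have : (k:ℝ) ≤ (k':ℝ) := by exact_mod_cast hkk'
            linarith)
          ⟨0, measure_ne_top _ _⟩
        rwa [hiter, measure_empty] at h
      have hevent : ∀ᶠ k : ℕ in atTop, ℙ {ω | (k:ℝ) < W ω} < ENNReal.ofReal δ :=
        hBtend.eventually_lt_const (ENNReal.ofReal_pos.2 hδ)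
      obtain ⟨k, hk⟩ := hevent.exists
      refine ⟨(k : ℝ), fun L => ?_⟩
      have habs : {ω | (k:ℝ) < |N L ω|} = N L ⁻¹' (Set.Ioi (k:ℝ)) := by
        ext ω
        simp only [Set.mem_setOf_eq, Set.mem_preimage, Set.mem_Ioi,
          abs_of_nonneg (hNnonneg L ω)]
      have hmeq : ℙ (N L ⁻¹' (Set.Ioi (k:ℝ))) = ℙ (M (L+1) ⁻¹' (Set.Ioi (k:ℝ))) :=
        (hNM L).measure_mem_eq measurableSet_Ioi
      have hsub : ℙ (M (L+1) ⁻¹' (Set.Ioi (k:ℝ))) ≤ ℙ {ω | (k:ℝ) < W ω} := by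
        apply measure_mono_ae
        filter_upwards [hae] with ω hω hmem
        have hmem' : (k:ℝ) < M (L+1) ω := hmem
        exact lt_of_lt_of_le hmem' (hω.2 (L+1))
      rw [habs, hmeq]
      exact lt_of_le_of_lt hsub hk
  · -- part (ii)
    intro hcrit K
    have hmean0 : ∫ ω, ξ 0 ω ∂ℙ = 0 := by rw [hξmean]; linarith
    -- the probability that an increment equals -1 is positive
    set a : ℝ := (ℙ {ω | ξ 0 ω = -1}).toReal with ha_def
    have hevent_eq : {ω | ξ 0 ω = -1} = (η 0 ⁻¹' {0}) ∩ (Y 0 ⁻¹' {1}) := by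
      ext ω
      simp only [Set.mem_setOf_eq, Set.mem_inter_iff, Set.mem_preimage, Set.mem_singleton_iff]
      constructor
      · intro h
        simp only [hξ_def] at h
        rcases Nat.le_one_iff_eq_zero_or_eq_one.1 (hY01 0 ω) with h0 | h1
        · exfalso
          rw [h0] at h
          have h2 : (0:ℝ) ≤ (η 0 ω : ℝ) := Nat.cast_nonneg _
          push_cast at h
          linarith
        · rw [h1] at h
          push_cast at h
          have h2 : (η 0 ω : ℝ) = 0 := by linarith
          exact ⟨Nat.cast_eq_zero.1 h2, h1⟩
      · rintro ⟨h1, h2⟩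
        simp only [hξ_def, h1, h2]
        norm_num
    have hmeas1' : MeasurableSet {ω | 1 ≤ η 0 ω} := hηmeas 0 measurableSet_Ici
    have hind_r : (ℙ {ω | 1 ≤ η 0 ω}).toReal ≤ mu := by
      have hmono : ∀ ω, Set.indicator {ω | 1 ≤ η 0 ω} (fun _ => (1:ℝ)) ω ≤ (η 0 ω : ℝ) := by
        intro ω
        by_cases h : ω ∈ {ω | 1 ≤ η 0 ω}
        · rw [Set.indicator_of_mem h]
          exact_mod_cast h
        · rw [Set.indicator_of_notMem h]
          positivity
      have h := integral_mono ((integrable_const (1:ℝ)).indicator hmeas1') hηint hmono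
      rwa [integral_indicator_const _ hmeas1', hηmean, smul_eq_mul, mul_one] at h
    have hcomp : η 0 ⁻¹' {0} = {ω | 1 ≤ η 0 ω}ᶜ := by
      ext ω
      simp only [Set.mem_preimage, Set.mem_singleton_iff, Set.mem_compl_iff, Set.mem_setOf_eq,
        not_le]
      omega
    have hη0val : (ℙ (η 0 ⁻¹' {0})).toReal = 1 - (ℙ {ω | 1 ≤ η 0 ω}).toReal := by
      rw [hcomp, prob_compl_eq_one_sub hmeas1',
        ENNReal.toReal_sub_of_le prob_le_one ENNReal.one_ne_top, ENNReal.toReal_one]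
    have hind01 : IndepFun (η 0) (Y 0) ℙ :=
      hindep.indepFun (show (Sum.inl 0 : ℕ ⊕ ℕ) ≠ Sum.inr 0 by simp)
    have hprod := (indepFun_iff_measure_inter_preimage_eq_mul.1 hind01) {0} {1}
      (measurableSet_singleton 0) (measurableSet_singleton 1)
    have ha : 0 < a := by
      rw [ha_def, hevent_eq, hprod, ENNReal.toReal_mul]
      have h2 : (ℙ (Y 0 ⁻¹' {1})).toReal = p := by
        rw [← hYpre 0, hYdist 0, ENNReal.toReal_ofReal hp0.le]
      rw [h2, hη0val]
      have h3 : 0 < 1 - mu := by rw [hcrit]; linarith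
      nlinarith [hind_r]
    -- exponential moment machinery
    have hexpmeas : ∀ t : ℝ, Measurable (fun x : ℝ => Real.exp (-(t * x))) :=
      fun t => Real.measurable_exp.comp (measurable_id.const_mul t).neg
    have hexpint : ∀ t : ℝ, 0 ≤ t → ∀ X : Ω → ℝ, Measurable X → (∀ ω, -1 ≤ X ω) →
        Integrable (fun ω => Real.exp (-(t * X ω))) ℙ := by
      intro t ht X hX hlb
      refine ⟨((hexpmeas t).comp hX).aestronglyMeasurable, ?_⟩
      apply HasFiniteIntegral.of_bounded (C := Real.exp t)
      filter_upwards with ω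
      rw [Real.norm_eq_abs, abs_of_pos (Real.exp_pos _), Real.exp_le_exp]
      nlinarith [hlb ω]
    set f : ℝ → ℝ := fun t => ∫ ω, Real.exp (-(t * ξ 0 ω)) ∂ℙ with hf_def
    set φ : ℝ → ℕ → ℝ := fun t n => ∫ ω, Real.exp (-(t * M n ω)) ∂ℙ with hφ_def
    set b : ℕ → ℝ := fun n => (ℙ {ω | M n ω = 0}).toReal with hb_def
    have hMlb : ∀ n (ω : Ω), (-1 : ℝ) ≤ M n ω := fun n ω => le_trans (by norm_num) (hMnonneg n ω)
    -- the key recursion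
    have hrec : ∀ t : ℝ, 0 ≤ t → ∀ n : ℕ,
        φ t (n+1) = f t * φ t n + (1 - Real.exp t) * (a * b n) := by
      intro t ht n
      set P : Ω → ℝ := fun ω => pmax (fun k => ξ (k+1) ω) n with hP_def
      have hPmeas : Measurable P := measurable_pmax n (fun k => ξ (k+1)) (fun k => hξmeas (k+1))
      have hPnonneg : ∀ ω, 0 ≤ P ω := fun ω => pmax_nonneg _ n
      have hPlb : ∀ ω, (-1:ℝ) ≤ P ω := fun ω => le_trans (by norm_num) (hPnonneg ω)
      have hPshift : IdentDistrib P (M n) ℙ ℙ := hMshift 1 n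
      set E : Set Ω := (ξ 0 ⁻¹' {-1}) ∩ (P ⁻¹' {0}) with hE_def
      have hEmeas : MeasurableSet E :=
        ((hξmeas 0) (measurableSet_singleton _)).inter (hPmeas (measurableSet_singleton _))
      have hpt : ∀ ω, Real.exp (-(t * M (n+1) ω))
          = Real.exp (-(t * ξ 0 ω)) * Real.exp (-(t * P ω))
            + Set.indicator E (fun _ => 1 - Real.exp t) ω := by
        intro ω
        have hMsucc : M (n+1) ω = max 0 (ξ 0 ω + P ω) := pmax_succ _ n
        by_cases hE : ω ∈ E
        · have h1' : ξ 0 ω = -1 := hE.1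
          have h2' : P ω = 0 := hE.2
          rw [Set.indicator_of_mem hE, hMsucc, h1', h2']
          have hmax : max (0:ℝ) (-1 + 0) = 0 := by norm_num
          rw [hmax, mul_zero, neg_zero, Real.exp_zero, mul_one, mul_neg_one, neg_neg]
          ring
        · rw [Set.indicator_of_notMem hE, add_zero, hMsucc]
          obtain ⟨z, hz⟩ := hξint_val 0 ω
          obtain ⟨k, hk⟩ := pmax_int n (fun i => ξ (i+1) ω) (fun i => hξint_val (i+1) ω)
          have hkP : P ω = (k : ℝ) := hk
          have hxge : -1 ≤ ξ 0 ω + P ω := by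
            have := hξlb 0 ω; have := hPnonneg ω; linarith
          have hxne : ξ 0 ω + P ω ≠ -1 := by
            intro hx
            apply hE
            have hξ0 : ξ 0 ω = -1 := by
              have h1 := hPnonneg ω; have h2 := hξlb 0 ω; linarith
            have hP0 : P ω = 0 := by linarith
            exact ⟨hξ0, hP0⟩
          have hx0 : 0 ≤ ξ 0 ω + P ω := by
            have hlt : (-1 : ℝ) < ξ 0 ω + P ω := lt_of_le_of_ne hxge (Ne.symm hxne)
            have hcast : ξ 0 ω + P ω = ((z + (k:ℤ) : ℤ) : ℝ) := by
              push_cast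
              rw [← hz, ← hkP]
            rw [hcast] at hlt ⊢
            have hzk : (-1 : ℤ) < z + (k:ℤ) := by exact_mod_cast hlt
            have hzk' : (0 : ℤ) ≤ z + (k:ℤ) := by omega
            exact_mod_cast hzk'
          rw [max_eq_right hx0, ← Real.exp_add]
          congr 1
          ring
      have hint1 : Integrable (fun ω => Real.exp (-(t * ξ 0 ω)) * Real.exp (-(t * P ω))) ℙ := by
        refine ⟨(((hexpmeas t).comp (hξmeas 0)).mul
          ((hexpmeas t).comp hPmeas)).aestronglyMeasurable, ?_⟩
        apply HasFiniteIntegral.of_bounded (C := Real.exp t)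
        filter_upwards with ω
        rw [Real.norm_eq_abs, abs_of_pos (by positivity)]
        have h1 : Real.exp (-(t * ξ 0 ω)) ≤ Real.exp t := by
          rw [Real.exp_le_exp]; nlinarith [hξlb 0 ω]
        have h2 : Real.exp (-(t * P ω)) ≤ 1 := by
          rw [← Real.exp_zero, Real.exp_le_exp]
          nlinarith [hPnonneg ω]
        nlinarith [Real.exp_pos (-(t * ξ 0 ω)), Real.exp_pos (-(t * P ω))]
      have hint2 : Integrable (Set.indicator E (fun _ => 1 - Real.exp t)) ℙ :=
        (integrable_const _).indicator hEmeas
      have hsplit : φ t (n+1) = (∫ ω, Real.exp (-(t * ξ 0 ω)) * Real.exp (-(t * P ω)) ∂ℙ)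
          + ∫ ω, Set.indicator E (fun _ => 1 - Real.exp t) ω ∂ℙ := by
        have hφeval : φ t (n+1) = ∫ ω, Real.exp (-(t * M (n+1) ω)) ∂ℙ := rfl
        rw [hφeval, ← integral_add hint1 hint2]
        exact integral_congr_ae (Filter.Eventually.of_forall hpt)
      have hindE : IndepFun (fun ω => Real.exp (-(t * ξ 0 ω))) (fun ω => Real.exp (-(t * P ω))) ℙ :=
        (hblock n).comp (hexpmeas t) (hexpmeas t)
      have hmul : ∫ ω, Real.exp (-(t * ξ 0 ω)) * Real.exp (-(t * P ω)) ∂ℙ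
          = f t * ∫ ω, Real.exp (-(t * P ω)) ∂ℙ :=
        hindE.integral_fun_mul_eq_mul_integral (hexpint t ht (ξ 0) (hξmeas 0) (hξlb 0)).1
          (hexpint t ht P hPmeas hPlb).1
      have hPint_eq : ∫ ω, Real.exp (-(t * P ω)) ∂ℙ = φ t n :=
        (hPshift.comp (hexpmeas t)).integral_eq
      have hEmeasure : (ℙ E).toReal = a * b n := by
        rw [hE_def, (indepFun_iff_measure_inter_preimage_eq_mul.1 (hblock n)) {-1} {0}
          (measurableSet_singleton (-1)) (measurableSet_singleton 0), ENNReal.toReal_mul]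
        have hs1 : ξ 0 ⁻¹' {-1} = {ω | ξ 0 ω = -1} := rfl
        have hs2 : ℙ (P ⁻¹' {0}) = ℙ (M n ⁻¹' {0}) :=
          hPshift.measure_mem_eq (measurableSet_singleton 0)
        have hs3 : M n ⁻¹' {0} = {ω | M n ω = 0} := rfl
        rw [hs1, hs2, hs3, ha_def, hb_def]
      have hindic : ∫ ω, Set.indicator E (fun _ => 1 - Real.exp t) ω ∂ℙ
          = (1 - Real.exp t) * (a * b n) := by
        rw [integral_indicator_const _ hEmeas, smul_eq_mul, measureReal_def, hEmeasure]
        ring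
      rw [hsplit, hmul, hPint_eq, hindic]
    -- limits in the recursion
    have hφnonneg : ∀ t n, 0 ≤ φ t n :=
      fun t n => integral_nonneg fun ω => (Real.exp_pos _).le
    have hφle1 : ∀ t, 0 ≤ t → ∀ n, φ t n ≤ 1 := by
      intro t ht n
      have h := integral_mono (hexpint t ht (M n) (hMmeas n) (hMlb n))
        (integrable_const 1) (fun ω => by
          rw [← Real.exp_zero, Real.exp_le_exp]
          nlinarith [hMnonneg n ω])
      rwa [integral_const, measureReal_def, measure_univ, ENNReal.toReal_one, one_smul] at h
    have hφanti : ∀ t, 0 ≤ t → Antitone (φ t) := by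
      intro t ht
      apply antitone_nat_of_succ_le
      intro n
      apply integral_mono (hexpint t ht (M (n+1)) (hMmeas (n+1)) (hMlb (n+1)))
        (hexpint t ht (M n) (hMmeas n) (hMlb n))
      intro ω
      rw [Real.exp_le_exp]
      have := hMmono ω (Nat.le_succ n)
      nlinarith
    have hbanti : Antitone b := by
      apply antitone_nat_of_succ_le
      intro n
      apply ENNReal.toReal_mono (measure_ne_top _ _)
      apply measure_mono
      intro ω hω
      have h1 : M (n+1) ω = 0 := hω
      have h2 := hMmono ω (Nat.le_succ n)
      have h3 := hMnonneg n ω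
      show M n ω = 0
      linarith
    have hbnonneg : ∀ n, 0 ≤ b n := fun n => ENNReal.toReal_nonneg
    set binf : ℝ := ⨅ n, b n with hbinf_def
    have hbinf_nonneg : 0 ≤ binf := le_ciInf hbnonneg
    have hblim : Tendsto b atTop (𝓝 binf) :=
      tendsto_atTop_ciInf hbanti ⟨0, by rintro x ⟨n, rfl⟩; exact hbnonneg n⟩
    have hφlim : ∀ t, 0 ≤ t → Tendsto (φ t) atTop (𝓝 (⨅ n, φ t n)) :=
      fun t ht => tendsto_atTop_ciInf (hφanti t ht)
        ⟨0, by rintro x ⟨n, rfl⟩; exact hφnonneg t n⟩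
    have hφinf_le1 : ∀ t, 0 ≤ t → (⨅ n, φ t n) ≤ 1 := by
      intro t ht
      refine le_trans (ciInf_le ⟨0, ?_⟩ 0) (hφle1 t ht 0)
      rintro x ⟨n, rfl⟩; exact hφnonneg t n
    have hφinf_nonneg : ∀ t, 0 ≤ t → 0 ≤ (⨅ n, φ t n) :=
      fun t ht => le_ciInf fun n => hφnonneg t n
    have hfix : ∀ t, 0 ≤ t →
        (⨅ n, φ t n) = f t * (⨅ n, φ t n) + (1 - Real.exp t) * (a * binf) := by
      intro t ht
      have h1 : Tendsto (fun n => φ t (n+1)) atTop (𝓝 (⨅ n, φ t n)) :=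
        (hφlim t ht).comp (tendsto_add_atTop_nat 1)
      have h2 : Tendsto (fun n => f t * φ t n + (1 - Real.exp t) * (a * b n)) atTop
          (𝓝 (f t * (⨅ n, φ t n) + (1 - Real.exp t) * (a * binf))) :=
        ((hφlim t ht).const_mul (f t)).add ((hblim.const_mul a).const_mul (1 - Real.exp t))
      have h3 : (fun n => φ t (n+1)) = fun n => f t * φ t n + (1 - Real.exp t) * (a * b n) :=
        funext (hrec t ht)
      rw [h3] at h1
      exact tendsto_nhds_unique h1 h2
    -- properties of f
    have hgpt : ∀ (t x : ℝ), 0 ≤ Real.exp (-(t * x)) - 1 + t * x := by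
      intro t x
      have := Real.add_one_le_exp (-(t * x))
      linarith
    have hgint : ∀ t : ℝ, 0 ≤ t →
        Integrable (fun ω => Real.exp (-(t * ξ 0 ω)) - 1 + t * ξ 0 ω) ℙ :=
      fun t ht => ((hexpint t ht (ξ 0) (hξmeas 0) (hξlb 0)).sub (integrable_const 1)).add
        (hξ0int.const_mul t)
    have hf_sub : ∀ t : ℝ, 0 ≤ t →
        f t - 1 = ∫ ω, (Real.exp (-(t * ξ 0 ω)) - 1 + t * ξ 0 ω) ∂ℙ := by
      intro t ht
      have hint_a : Integrable (fun ω => Real.exp (-(t * ξ 0 ω)) - 1) ℙ :=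
        (hexpint t ht (ξ 0) (hξmeas 0) (hξlb 0)).sub (integrable_const 1)
      have hint_b : Integrable (fun ω => t * ξ 0 ω) ℙ := hξ0int.const_mul t
      have h : ∫ ω, (Real.exp (-(t * ξ 0 ω)) - 1 + t * ξ 0 ω) ∂ℙ
          = (f t - 1) + t * 0 := by
        rw [integral_add hint_a hint_b,
          integral_sub (hexpint t ht (ξ 0) (hξmeas 0) (hξlb 0)) (integrable_const 1),
          integral_const, measureReal_def, measure_univ, ENNReal.toReal_one, one_smul,
          integral_const_mul, hmean0]
      rw [h]
      ring
    have hf_ge1 : ∀ t, 0 ≤ t → 1 ≤ f t := by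
      intro t ht
      have h2 : 0 ≤ f t - 1 := by
        rw [hf_sub t ht]
        exact integral_nonneg fun ω => hgpt t (ξ 0 ω)
      linarith
    have hmeasE1 : MeasurableSet {ω | ξ 0 ω = -1} := (hξmeas 0) (measurableSet_singleton (-1))
    have hf_strict : 1 < f 1 := by
      have hlow : ∀ ω, Set.indicator {ω | ξ 0 ω = -1} (fun _ => Real.exp 1 - 2) ω
          ≤ Real.exp (-(1 * ξ 0 ω)) - 1 + 1 * ξ 0 ω := by
        intro ω
        by_cases hω : ω ∈ {ω | ξ 0 ω = -1}
        · rw [Set.indicator_of_mem hω]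
          have hξω : ξ 0 ω = -1 := hω
          have hq1 : -((1:ℝ) * (-1)) = 1 := by norm_num
          have hq2 : (1:ℝ) * (-1) = -1 := by norm_num
          rw [hξω, hq1, hq2]
          linarith
        · rw [Set.indicator_of_notMem hω]
          exact hgpt 1 (ξ 0 ω)
      have h2 := integral_mono ((integrable_const _).indicator hmeasE1)
        (hgint 1 zero_le_one) hlow
      rw [integral_indicator_const _ hmeasE1, smul_eq_mul, measureReal_def, ← ha_def] at h2
      have h3 : 0 < a * (Real.exp 1 - 2) := by
        have he := Real.exp_one_gt_d9
        apply mul_pos ha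
        norm_num at he ⊢
        linarith
      have h4 := hf_sub 1 zero_le_one
      linarith
    -- the limit t → 0 shows binf = 0
    have hkey : ∀ t : ℝ, 0 < t → t * (a * binf) ≤ f t - 1 := by
      intro t ht
      have heq := hfix t ht.le
      have h2 : (Real.exp t - 1) * (a * binf) = (⨅ n, φ t n) * (f t - 1) := by
        linear_combination heq
      have h3 : (⨅ n, φ t n) * (f t - 1) ≤ f t - 1 :=
        mul_le_of_le_one_left (by linarith [hf_ge1 t ht.le]) (hφinf_le1 t ht.le)
      have h4 : t * (a * binf) ≤ (Real.exp t - 1) * (a * binf) := by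
        have h5 : t ≤ Real.exp t - 1 := by linarith [Real.add_one_le_exp t]
        have h6 : 0 ≤ a * binf := mul_nonneg ha.le hbinf_nonneg
        exact mul_le_mul_of_nonneg_right h5 h6
      linarith
    set tj : ℕ → ℝ := fun j => 1 / ((j : ℝ) + 1) with htj_def
    have htjpos : ∀ j, 0 < tj j := by
      intro j
      have : (0:ℝ) < (j:ℝ) + 1 := by positivity
      exact div_pos one_pos this
    have htjle1 : ∀ j, tj j ≤ 1 := by
      intro j
      rw [htj_def]
      simp only
      rw [div_le_one (by positivity)]
      have : (0:ℝ) ≤ (j:ℝ) := Nat.cast_nonneg j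
      linarith
    have htj0 : Tendsto tj atTop (𝓝 0) := tendsto_one_div_add_atTop_nhds_zero_nat
    -- pointwise bounds on the normalized integrand
    have hGb : ∀ j (ω : Ω),
        ‖(Real.exp (-(tj j * ξ 0 ω)) - 1 + tj j * ξ 0 ω) / tj j‖ ≤ |ξ 0 ω| + 2 := by
      intro j ω
      set t := tj j
      set x := ξ 0 ω
      have htp := htjpos j
      have ht1 := htjle1 j
      have hnn : 0 ≤ (Real.exp (-(t * x)) - 1 + t * x) / t := div_nonneg (hgpt t x) htp.le
      rw [Real.norm_eq_abs, abs_of_nonneg hnn]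
      by_cases hc : t * |x| ≤ 1
      · have hu : |(-(t * x))| ≤ 1 := by
          rw [abs_neg, abs_mul, abs_of_pos htp]
          exact hc
        have hquad := exp_taylor_quad hu
        have h2 : Real.exp (-(t * x)) - 1 + t * x ≤ t ^ 2 * x ^ 2 := by
          have : (-(t * x)) ^ 2 = t ^ 2 * x ^ 2 := by ring
          nlinarith [hquad]
        rw [div_le_iff₀ htp]
        have hxb : t * x ^ 2 ≤ |x| := by
          have : x ^ 2 = |x| * |x| := by rw [← sq_abs]; ring
          nlinarith [abs_nonneg x]
        nlinarith [abs_nonneg x]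
      · push_neg at hc
        have hxpos : 0 < x := by
          rcases le_or_gt x 0 with h | h
          · exfalso
            have : |x| ≤ 1 := by
              rw [abs_of_nonpos h]
              linarith [hξlb 0 ω]
            nlinarith
          · exact h
        have h2 : Real.exp (-(t * x)) ≤ 1 := by
          rw [← Real.exp_zero, Real.exp_le_exp]
          nlinarith
        rw [div_le_iff₀ htp]
        have : |x| = x := abs_of_pos hxpos
        nlinarith [abs_nonneg x]
    have hGlim : ∀ ω : Ω, Tendsto
        (fun j => (Real.exp (-(tj j * ξ 0 ω)) - 1 + tj j * ξ 0 ω) / tj j) atTop (𝓝 0) := by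
      intro ω
      set x := ξ 0 ω
      apply squeeze_zero' (Filter.Eventually.of_forall fun j => div_nonneg (hgpt _ x) (htjpos j).le)
        (g := fun j => tj j * x ^ 2)
      · have hev : ∀ᶠ j in atTop, tj j * |x| ≤ 1 := by
          have h7 := htj0.mul_const |x|
          rw [zero_mul] at h7
          exact h7.eventually (eventually_le_nhds one_pos)
        filter_upwards [hev] with j hj
        have htp := htjpos j
        have hu : |(-(tj j * x))| ≤ 1 := by
          rw [abs_neg, abs_mul, abs_of_pos htp]
          exact hj
        have hquad := exp_taylor_quad hu
        have h2 : Real.exp (-(tj j * x)) - 1 + tj j * x ≤ (tj j) ^ 2 * x ^ 2 := by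
          nlinarith [hquad]
        rw [div_le_iff₀ htp]
        nlinarith [sq_nonneg x, htp]
      · have h8 := htj0.mul_const (x ^ 2)
        rw [zero_mul] at h8
        exact h8
    have hDCT : Tendsto (fun j => ∫ ω,
        (Real.exp (-(tj j * ξ 0 ω)) - 1 + tj j * ξ 0 ω) / tj j ∂ℙ) atTop (𝓝 0) := by
      have h0 : 𝓝 (0:ℝ) = 𝓝 (∫ (_ : Ω), (0:ℝ) ∂ℙ) := by simp
      rw [h0]
      apply tendsto_integral_of_dominated_convergence (bound := fun ω => |ξ 0 ω| + 2)
      · intro j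
        exact ((((hexpmeas (tj j)).comp (hξmeas 0)).sub measurable_const).add
          ((hξmeas 0).const_mul (tj j))).div_const _ |>.aestronglyMeasurable
      · exact hξ0int.abs.add (integrable_const 2)
      · intro j
        exact Filter.Eventually.of_forall fun ω => hGb j ω
      · exact Filter.Eventually.of_forall fun ω => hGlim ω
    have hratio : Tendsto (fun j => (f (tj j) - 1) / tj j) atTop (𝓝 0) := by
      have heq : (fun j => (f (tj j) - 1) / tj j) = fun j => ∫ ω,
          (Real.exp (-(tj j * ξ 0 ω)) - 1 + tj j * ξ 0 ω) / tj j ∂ℙ := by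
        funext j
        rw [hf_sub (tj j) (htjpos j).le, integral_div]
      rw [heq]
      exact hDCT
    have hbinf0 : binf = 0 := by
      have hle : ∀ j, a * binf ≤ (f (tj j) - 1) / tj j := by
        intro j
        rw [le_div_iff₀ (htjpos j)]
        have := hkey (tj j) (htjpos j)
        linarith
      have hfinal : a * binf ≤ 0 := ge_of_tendsto hratio (Filter.Eventually.of_forall hle)
      have h6 : 0 ≤ a * binf := mul_nonneg ha.le hbinf_nonneg
      have h7 : a * binf = 0 := le_antisymm hfinal h6
      rcases mul_eq_zero.1 h7 with h | h
      · exact absurd h (ne_of_gt ha)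
      · exact h
    have hφinf1 : (⨅ n, φ 1 n) = 0 := by
      have heq := hfix 1 zero_le_one
      rw [hbinf0, mul_zero, mul_zero, add_zero] at heq
      have h1 : (⨅ n, φ 1 n) * (f 1 - 1) = 0 := by linear_combination -heq
      rcases mul_eq_zero.1 h1 with h | h
      · exact h
      · exfalso; linarith [hf_strict]
    have hφ1tend : Tendsto (φ 1) atTop (𝓝 0) := by
      have := hφlim 1 zero_le_one
      rwa [hφinf1] at this
    -- conclude
    have hMbound : ∀ n, ℙ {ω | M n ω ≤ K} ≤ ENNReal.ofReal (Real.exp (max K 0) * φ 1 n) := by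
      intro n
      have hmeasK : MeasurableSet {ω | M n ω ≤ K} := hMmeas n measurableSet_Iic
      have hptind : ∀ ω, Set.indicator {ω | M n ω ≤ K} (fun _ => Real.exp (-(max K 0))) ω
          ≤ Real.exp (-(1 * M n ω)) := by
        intro ω
        by_cases hω : ω ∈ {ω | M n ω ≤ K}
        · rw [Set.indicator_of_mem hω, Real.exp_le_exp]
          have h1 : M n ω ≤ max K 0 := le_trans hω (le_max_left _ _)
          linarith
        · rw [Set.indicator_of_notMem hω]
          positivity
      have h2 := integral_mono ((integrable_const _).indicator hmeasK)
        (hexpint 1 zero_le_one (M n) (hMmeas n) (hMlb n)) hptind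
      rw [integral_indicator_const _ hmeasK, smul_eq_mul, measureReal_def] at h2
      have h3 : (ℙ {ω | M n ω ≤ K}).toReal ≤ Real.exp (max K 0) * φ 1 n := by
        have hmul := mul_le_mul_of_nonneg_right h2 (Real.exp_pos (max K 0)).le
        rw [mul_assoc, ← Real.exp_add, neg_add_cancel, Real.exp_zero, mul_one] at hmul
        have hphi : φ 1 n = ∫ ω, Real.exp (-(1 * M n ω)) ∂ℙ := rfl
        rw [← hphi] at hmul
        linarith
      calc ℙ {ω | M n ω ≤ K} = ENNReal.ofReal ((ℙ {ω | M n ω ≤ K}).toReal) :=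
            (ENNReal.ofReal_toReal (measure_ne_top _ _)).symm
        _ ≤ ENNReal.ofReal (Real.exp (max K 0) * φ 1 n) := ENNReal.ofReal_le_ofReal h3
    have hNK : ∀ L, ℙ {ω | N L ω ≤ K} = ℙ {ω | M (L+1) ω ≤ K} := by
      intro L
      exact (hNM L).measure_mem_eq measurableSet_Iic
    have hupper : Tendsto (fun L => ENNReal.ofReal (Real.exp (max K 0) * φ 1 (L+1)))
        atTop (𝓝 0) := by
      have h1 : Tendsto (fun L => Real.exp (max K 0) * φ 1 (L+1)) atTop (𝓝 0) := by
        have h2 := (hφ1tend.comp (tendsto_add_atTop_nat 1)).const_mul (Real.exp (max K 0))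
        simpa using h2
      have h3 := (ENNReal.continuous_ofReal.tendsto 0).comp h1
      rw [ENNReal.ofReal_zero] at h3
      exact h3
    apply tendsto_of_tendsto_of_tendsto_of_le_of_le tendsto_const_nhds hupper
      (fun L => zero_le) ?_
    intro L
    show ℙ {ω | N L ω ≤ K} ≤ ENNReal.ofReal (Real.exp (max K 0) * φ 1 (L+1))
    calc ℙ {ω | N L ω ≤ K} = ℙ {ω | M (L+1) ω ≤ K} := hNK L
      _ ≤ _ := hMbound (L+1)
  · -- part (iii)
    intro hlt
    have hc : 0 < mu - p := by linarith
    have hNgeU : ∀ (L : ℕ) (ω : Ω), (∑ i ∈ Finset.range (L+1), ξ i ω) ≤ N L ω := by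
      intro L
      induction L with
      | zero =>
          intro ω
          rw [Finset.sum_range_one, hN0 ω]
          exact le_max_left _ _
      | succ L ih =>
          intro ω
          rw [Finset.sum_range_succ, hNrec L ω]
          exact le_max_of_le_left (add_le_add_left (ih ω) _)
    set D : ℕ → Set Ω := fun L => {ω | N L ω < (mu - p) * L / 2} with hD_def
    have hDmeas : ∀ L, MeasurableSet (D L) :=
      fun L => measurableSet_lt (hNmeas L) measurable_const
    set A : ℕ → Set Ω := fun L => ⋂ m, ⋂ (_ : L ≤ m), (D m)ᶜ with hA_def
    have hAmono : Monotone A := by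
      intro L L' hLL'
      apply Set.iInter₂_mono'
      intro m hm
      exact ⟨m, by omega, subset_rfl⟩
    have hUnion : ℙ (⋃ L, A L) = 1 := by
      have hae : (⋃ L, A L) =ᵐ[ℙ] (Set.univ : Set Ω) := by
        rw [Filter.eventuallyEq_univ]
        filter_upwards [hslln] with ω hω
        have h2 : ∀ᶠ n : ℕ in atTop,
            (mu - p) / 2 ≤ (∑ i ∈ Finset.range n, ξ i ω) / n :=
          hω.eventually (eventually_ge_nhds (by linarith))
        obtain ⟨n₀, hn₀⟩ := eventually_atTop.1 h2
        refine Set.mem_iUnion.2 ⟨n₀, ?_⟩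
        refine Set.mem_iInter.2 fun m => Set.mem_iInter.2 fun hm => ?_
        simp only [hD_def, Set.mem_compl_iff, Set.mem_setOf_eq, not_lt]
        have h3 := hn₀ (m+1) (by omega)
        have hpos : (0:ℝ) < ((m+1 : ℕ) : ℝ) := by positivity
        have h4 : (mu - p) / 2 * ((m+1 : ℕ) : ℝ) ≤ ∑ i ∈ Finset.range (m+1), ξ i ω :=
          (le_div_iff₀ hpos).1 h3
        have h5 : ((m+1 : ℕ) : ℝ) = (m : ℝ) + 1 := by push_cast; ring
        calc (mu - p) * m / 2 ≤ (mu - p) / 2 * ((m+1 : ℕ) : ℝ) := by rw [h5]; nlinarith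
          _ ≤ ∑ i ∈ Finset.range (m+1), ξ i ω := h4
          _ ≤ N m ω := hNgeU m ω
      rw [measure_congr hae, measure_univ]
    have htendA : Tendsto (fun L => ℙ (A L)) atTop (𝓝 1) := by
      have h := tendsto_measure_iUnion_atTop (μ := ℙ) hAmono
      rwa [hUnion] at h
    have hleA : ∀ L, ℙ (A L) ≤ ℙ {ω | (mu - p) * L / 2 ≤ N L ω} := by
      intro L
      apply measure_mono
      intro ω hω
      have h1 : ω ∈ (D L)ᶜ := Set.mem_iInter.1 (Set.mem_iInter.1 hω L) (le_refl L)
      simpa only [hD_def, Set.mem_compl_iff, Set.mem_setOf_eq, not_lt] using h1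
    exact tendsto_of_tendsto_of_tendsto_of_le_of_le htendA tendsto_const_nhds hleA
      (fun L => prob_le_one)
end

section
/- Let (ξ_i)_{i≥0} be i.i.d. real-valued random variables and let N be the reflected (Lindley) recursion driven by (ξ_i). Then for every n ≥ 0, N_n has the same distribution as max(0, S_0, S_1, …, S_n), where S_k = ξ_0 + ξ_1 + ⋯ + ξ_k. -/
open MeasureTheory ProbabilityTheory Filter Topology

private lemma measurable_finset_sup' {ι δ : Type*} [MeasurableSpace δ]
    {s : Finset ι} (hs : s.Nonempty) (f : ι → δ → ℝ) (hf : ∀ i, Measurable (f i)) :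
    Measurable (fun a => s.sup' hs fun i => f i a) := by
  induction hs using Finset.Nonempty.cons_induction with
  | singleton i => exact hf i
  | cons i s hi hne ih =>
    have h : (fun a => (Finset.cons i s hi).sup' (Finset.cons_nonempty hi) fun j => f j a)
        = fun a => max (f i a) (s.sup' hne fun j => f j a) :=
      funext fun a => Finset.sup'_cons hne _
    rw [h]
    exact (hf i).max ih

private lemma sup'_range_succ_first (f : ℕ → ℝ) (n : ℕ) :
    (Finset.range (n + 1 + 1)).sup' Finset.nonempty_range_add_one f
      = max (f 0)
          ((Finset.range (n + 1)).sup' Finset.nonempty_range_add_one fun k => f (k + 1)) := by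
  apply le_antisymm
  · apply Finset.sup'_le
    intro k hk
    rw [Finset.mem_range] at hk
    rcases k with _ | j
    · exact le_max_left _ _
    · exact le_max_of_le_right
        (Finset.le_sup' (fun k => f (k + 1)) (Finset.mem_range.2 (by omega)))
  · apply max_le
    · exact Finset.le_sup' f (Finset.mem_range.2 (by omega))
    · apply Finset.sup'_le
      intro k hk
      rw [Finset.mem_range] at hk
      exact Finset.le_sup' f (Finset.mem_range.2 (by omega))

/-- **Lindley recursion has the law of the running maximum of the random walk.**
Let `(ξ_i)` be i.i.d. real random variables and let `N` be the reflected (Lindley) recursion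
driven by `(ξ_i)`: `N₀ = max(ξ₀,0)`, `N_{i+1} = max(N_i + ξ_{i+1}, 0)`.  Then for every `n`,
`N_n` has the same distribution as `max(0, S₀, S₁, …, S_n)` where `S_k = ξ₀ + ⋯ + ξ_k`. -/
theorem lindley_identDistrib_running_max
    {Ω : Type*} [MeasureSpace Ω] [IsProbabilityMeasure (ℙ : Measure Ω)]
    (ξ : ℕ → Ω → ℝ)
    (hmeas : ∀ i, Measurable (ξ i))
    (hindep : iIndepFun ξ ℙ)
    (hident : ∀ i, IdentDistrib (ξ i) (ξ 0) ℙ ℙ)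
    (N : ℕ → Ω → ℝ)
    (hN0 : ∀ ω, N 0 ω = max (ξ 0 ω) 0)
    (hNrec : ∀ i ω, N (i + 1) ω = max (N i ω + ξ (i + 1) ω) 0) :
    ∀ n : ℕ,
      IdentDistrib (N n)
        (fun ω => max 0 ((Finset.range (n + 1)).sup' Finset.nonempty_range_add_one
          (fun k => ∑ i ∈ Finset.range (k + 1), ξ i ω)))
        ℙ ℙ := by
  -- Step 1: pointwise, `N n` is the running max of the *reversed* partial sums.
  have key : ∀ n : ℕ, ∀ ω,
      N n ω = max 0 ((Finset.range (n + 1)).sup' Finset.nonempty_range_add_one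
        (fun k => ∑ i ∈ Finset.range (k + 1), ξ (n - i) ω)) := by
    intro n
    induction n with
    | zero =>
      intro ω
      have : (Finset.range 1).sup' Finset.nonempty_range_add_one
          (fun k => ∑ i ∈ Finset.range (k + 1), ξ (0 - i) ω) = ξ 0 ω := by
        apply le_antisymm
        · apply Finset.sup'_le
          intro k hk
          rw [Finset.mem_range] at hk
          interval_cases k
          simp
        · refine le_trans (le_of_eq ?_) (Finset.le_sup'
            (fun k => ∑ i ∈ Finset.range (k + 1), ξ (0 - i) ω)
            (Finset.mem_range.2 Nat.zero_lt_one))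
          simp
      rw [hN0 ω, this, max_comm]
    | succ n ih =>
      intro ω
      rw [hNrec n ω, ih ω]
      set a := ξ (n + 1) ω with ha
      have hsum : ∀ k, (∑ i ∈ Finset.range (k + 1), ξ (n - i) ω) + a
          = ∑ i ∈ Finset.range (k + 2), ξ (n + 1 - i) ω := by
        intro k
        rw [Finset.sum_range_succ' (fun i => ξ (n + 1 - i) ω) (k + 1)]
        simp only [Nat.succ_sub_succ_eq_sub, Nat.sub_zero]
        rw [ha]
      rw [show ((max 0 ((Finset.range (n + 1)).sup' Finset.nonempty_range_add_one fun k => ∑ i ∈ Finset.range (k + 1), ξ (n - i) ω)) + a) = max (0 + a) (((Finset.range (n + 1)).sup' Finset.nonempty_range_add_one fun k => ∑ i ∈ Finset.range (k + 1), ξ (n - i) ω) + a) from (max_add_add_right _ _ _).symm, zero_add, Finset.sup'_add, max_comm _ (0 : ℝ)]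
      congr 1
      have h1 : ((Finset.range (n + 1)).sup' Finset.nonempty_range_add_one
            fun k => (∑ i ∈ Finset.range (k + 1), ξ (n - i) ω) + a)
          = (Finset.range (n + 1)).sup' Finset.nonempty_range_add_one
            fun k => ∑ i ∈ Finset.range (k + 1 + 1), ξ (n + 1 - i) ω := by
        apply Finset.sup'_congr _ rfl
        intro k _
        exact hsum k
      rw [h1,
        sup'_range_succ_first (fun k => ∑ i ∈ Finset.range (k + 1), ξ (n + 1 - i) ω) n]
      simp [ha]
  -- Step 2: the reversed tuple has the same law as the forward tuple.
  intro n
  set T : Ω → (Fin (n + 1) → ℝ) := fun ω i => ξ i ω with hTdef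
  set Rv : Ω → (Fin (n + 1) → ℝ) := fun ω i => ξ (n - (i : ℕ)) ω with hRdef
  have hT : Measurable T := measurable_pi_lambda _ fun i => hmeas i
  have hR : Measurable Rv := measurable_pi_lambda _ fun i => hmeas _
  set μ0 : Measure ℝ := Measure.map (ξ 0) ℙ with hμ0
  have hmap : Measure.map Rv ℙ = Measure.map T ℙ := by
    haveI : IsProbabilityMeasure (Measure.map Rv ℙ) :=
      Measure.isProbabilityMeasure_map hR.aemeasurable
    haveI : IsProbabilityMeasure (Measure.map T ℙ) :=
      Measure.isProbabilityMeasure_map hT.aemeasurable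
    refine ext_of_generate_finite _ generateFrom_pi.symm isPiSystem_pi ?_ (by simp)
    rintro s ⟨B, hB, rfl⟩
    have hBm : ∀ i, MeasurableSet (B i) := fun i => hB i trivial
    have hbox : MeasurableSet (Set.univ.pi B) := MeasurableSet.univ_pi hBm
    -- forward tuple
    set B' : ℕ → Set ℝ := fun j => if h : j < n + 1 then B ⟨j, h⟩ else Set.univ with hB'def
    have hB'm : ∀ j, MeasurableSet (B' j) := by
      intro j
      by_cases h : j ≤ n <;> simp [hB'def, h, hBm]
    set B'' : ℕ → Set ℝ :=
      fun j => if h : j < n + 1 then B ⟨n - j, by omega⟩ else Set.univ with hB''def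
    have hB''m : ∀ j, MeasurableSet (B'' j) := by
      intro j
      by_cases h : j ≤ n <;> simp [hB''def, h, hBm]
    have hpre : ∀ j, ℙ ((ξ j) ⁻¹' (B' j)) = μ0 (B' j) := by
      intro j
      rw [← Measure.map_apply (hmeas j) (hB'm j), (hident j).map_eq]
    have hpre'' : ∀ j, ℙ ((ξ j) ⁻¹' (B'' j)) = μ0 (B'' j) := by
      intro j
      rw [← Measure.map_apply (hmeas j) (hB''m j), (hident j).map_eq]
    have preimT : T ⁻¹' Set.univ.pi B
        = ⋂ j ∈ Finset.range (n + 1), (ξ j) ⁻¹' (B' j) := by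
      ext ω
      simp only [Set.mem_preimage, Set.mem_pi, Set.mem_univ, forall_true_left,
        Set.mem_iInter, Finset.mem_range]
      constructor
      · intro h j hj
        have := h ⟨j, hj⟩
        simpa [hB'def, dif_pos hj, hTdef, show j ≤ n by omega] using this
      · intro h i
        have := h i i.isLt
        simpa [hB'def, dif_pos i.isLt, hTdef, show (i : ℕ) ≤ n by omega] using this
    have preimR : Rv ⁻¹' Set.univ.pi B
        = ⋂ j ∈ Finset.range (n + 1), (ξ j) ⁻¹' (B'' j) := by
      ext ω
      simp only [Set.mem_preimage, Set.mem_pi, Set.mem_univ, forall_true_left,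
        Set.mem_iInter, Finset.mem_range]
      constructor
      · intro h j hj
        have hj' : n - j < n + 1 := by omega
        have := h ⟨n - j, hj'⟩
        have hval : n - (n - j) = j := by omega
        simp only [hRdef, hval] at this
        simpa [hB''def, dif_pos hj, show j ≤ n by omega] using this
      · intro h i
        have hi : (i : ℕ) < n + 1 := i.isLt
        have := h (n - (i : ℕ)) (by omega)
        simp only [hB''def, dif_pos (show n - (i : ℕ) < n + 1 by omega)] at this
        have hval : n - (n - (i : ℕ)) = (i : ℕ) := by omega
        have hfin : (⟨n - (n - (i : ℕ)), by omega⟩ : Fin (n + 1)) = i :=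
          Fin.ext hval
        rw [hfin] at this
        simpa [hRdef] using this
    have hindT : ℙ (⋂ j ∈ Finset.range (n + 1), (ξ j) ⁻¹' (B' j))
        = ∏ j ∈ Finset.range (n + 1), ℙ ((ξ j) ⁻¹' (B' j)) :=
      hindep.meas_biInter fun j _ => ⟨B' j, hB'm j, rfl⟩
    have hindR : ℙ (⋂ j ∈ Finset.range (n + 1), (ξ j) ⁻¹' (B'' j))
        = ∏ j ∈ Finset.range (n + 1), ℙ ((ξ j) ⁻¹' (B'' j)) :=
      hindep.meas_biInter fun j _ => ⟨B'' j, hB''m j, rfl⟩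
    rw [Measure.map_apply hR hbox, Measure.map_apply hT hbox, preimT, preimR,
      hindT, hindR]
    simp only [hpre, hpre'']
    -- reindex the product by the reflection `j ↦ n - j`
    have hrefl := Finset.prod_range_reflect (fun j => μ0 (B' j)) (n + 1)
    have hBB : ∀ j ∈ Finset.range (n + 1), μ0 (B'' j) = μ0 (B' (n + 1 - 1 - j)) := by
      intro j hj
      rw [Finset.mem_range] at hj
      have h1 : n + 1 - 1 - j = n - j := by omega
      have h2 : n - j < n + 1 := by omega
      rw [h1]
      simp only [hB''def, hB'def, dif_pos hj, dif_pos h2]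
    rw [Finset.prod_congr rfl hBB, hrefl]
  -- Step 3: apply a common measurable functional to both tuples.
  set g : (Fin (n + 1) → ℝ) → ℝ := fun x =>
    max 0 ((Finset.range (n + 1)).sup' Finset.nonempty_range_add_one
      (fun k => ∑ i ∈ Finset.range (k + 1), x ⟨min i n, by omega⟩)) with hgdef
  have hgmeas : Measurable g := by
    apply Measurable.max measurable_const
    apply measurable_finset_sup'
    intro k
    exact Finset.measurable_sum _ fun i _ => measurable_pi_apply _
  have hIdT : IdentDistrib Rv T ℙ ℙ := ⟨hR.aemeasurable, hT.aemeasurable, hmap⟩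
  have hcomp := hIdT.comp hgmeas
  have h1 : (g ∘ Rv) = N n := by
    funext ω
    rw [Function.comp_apply, key n ω, hgdef]
    apply congrArg (max 0)
    apply Finset.sup'_congr _ rfl
    intro k hk
    apply Finset.sum_congr rfl
    intro i hi
    rw [Finset.mem_range] at hk hi
    have : min i n = i := by omega
    simp [hRdef, this]
  have h2 : (g ∘ T) = fun ω => max 0 ((Finset.range (n + 1)).sup' Finset.nonempty_range_add_one
      (fun k => ∑ i ∈ Finset.range (k + 1), ξ i ω)) := by
    funext ω
    rw [Function.comp_apply, hgdef]
    apply congrArg (max 0)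
    apply Finset.sup'_congr _ rfl
    intro k hk
    apply Finset.sum_congr rfl
    intro i hi
    rw [Finset.mem_range] at hk hi
    have : min i n = i := by omega
    simp [hTdef, this]
  rw [← h1, ← h2]
  exact hcomp
end

section
/- Let d ≥ 1. Let 𝓑 be a random subset of ℤ^d whose law is invariant under every translation of ℤ^d, ergodic with respect to the translation by each standard basis vector, and satisfies P[𝓑 ≠ ∅] = 1. Let (X_n)_{n≥0} be a random walk on ℤ^d started at X_0 = 0 whose i.i.d. steps have a nearest-neighbor distribution p with p(e_1) > 0, and which is independent of 𝓑. Then P[X_n ∈ 𝓑 for infinitely many n] = 1. -/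
open MeasureTheory ProbabilityTheory Filter Topology
open scoped ENNReal

namespace RWErg

variable {d : ℕ}

/-- shift of a scenery -/
def shf (z : Fin d → ℤ) (f : (Fin d → ℤ) → Bool) : (Fin d → ℤ) → Bool := fun x => f (x + z)

lemma measurable_shf (z : Fin d → ℤ) : Measurable (shf z) :=
  measurable_pi_lambda _ (fun x => measurable_pi_apply (x + z))

lemma shf_shf (a b : Fin d → ℤ) (f : (Fin d → ℤ) → Bool) :
    shf a (shf b f) = shf (a + b) f := by
  funext x; simp [shf, add_assoc]

lemma shf_zero (f : (Fin d → ℤ) → Bool) : shf 0 f = f := by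
  funext x; simp [shf]

/-- skew product: shift the scenery by the first step, drop the first step. -/
def skew : (((Fin d → ℤ) → Bool) × (ℕ → Fin d → ℤ)) →
    (((Fin d → ℤ) → Bool) × (ℕ → Fin d → ℤ)) :=
  fun y => (shf (y.2 0) y.1, fun n => y.2 (n + 1))

lemma measurable_skew : Measurable (skew (d := d)) := by
  apply Measurable.prod
  · apply measurable_pi_lambda
    intro x
    have : (fun y : ((Fin d → ℤ) → Bool) × (ℕ → Fin d → ℤ) => y.1 (x + y.2 0))
        = (fun q : (((Fin d → ℤ) → Bool) × (Fin d → ℤ)) => q.1 (x + q.2)) ∘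
          (fun y => (y.1, y.2 0)) := rfl
    rw [show (fun y : ((Fin d → ℤ) → Bool) × (ℕ → Fin d → ℤ) => skew y |>.1 x)
        = (fun y : ((Fin d → ℤ) → Bool) × (ℕ → Fin d → ℤ) => y.1 (x + y.2 0)) from rfl, this]
    refine (measurable_from_prod_countable_left fun z => ?_).comp
      (measurable_fst.prodMk (measurable_snd.eval))
    exact measurable_pi_apply (x + z)
  · exact measurable_pi_lambda _ (fun n => (measurable_pi_apply (n + 1)).comp measurable_snd)

lemma skew_iterate (n : ℕ) (y : ((Fin d → ℤ) → Bool) × (ℕ → Fin d → ℤ)) :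
    skew^[n] y = (shf (∑ i ∈ Finset.range n, y.2 i) y.1, fun k => y.2 (k + n)) := by
  induction n generalizing y with
  | zero => simp [shf_zero]
  | succ n ih =>
    rw [Function.iterate_succ_apply, ih (skew y)]
    
    refine Prod.ext ?_ ?_
    · show shf (∑ i ∈ Finset.range n, y.2 (i + 1)) (shf (y.2 0) y.1) = _
      rw [shf_shf]
      congr 1
      rw [Finset.sum_range_succ']
    · funext k
      show y.2 (k + n + 1) = y.2 (k + (n + 1))
      ring_nf

/-- boxes: cylinder sets given by constraints on the first `n` coordinates -/
def box (n : ℕ) (s : ℕ → Set (Fin d → ℤ)) : Set (ℕ → Fin d → ℤ) :=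
  {u | ∀ i < n, u i ∈ s i}

def boxes (d : ℕ) : Set (Set (ℕ → Fin d → ℤ)) :=
  {t | ∃ n s, t = box n s}

lemma box_zero (s : ℕ → Set (Fin d → ℤ)) : box 0 s = Set.univ := by
  ext u; simp [box]

lemma measurableSet_box (n : ℕ) (s : ℕ → Set (Fin d → ℤ)) :
    MeasurableSet (box n s) := by
  have : box n s = ⋂ i ∈ Finset.range n, (fun u : ℕ → Fin d → ℤ => u i) ⁻¹' (s i) := by
    ext u; simp [box]
  rw [this]
  exact MeasurableSet.biInter (Finset.range n).countable_toSet
    (fun i _ => (measurable_pi_apply i) MeasurableSet.of_discrete)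

lemma isPiSystem_boxes : IsPiSystem (boxes d) := by
  rintro t ⟨n, s, rfl⟩ t' ⟨m, s', rfl⟩ -
  refine ⟨max n m, fun i => (if i < n then s i else Set.univ) ∩
    (if i < m then s' i else Set.univ), ?_⟩
  ext u
  simp only [Set.mem_inter_iff, box, Set.mem_setOf_eq]
  constructor
  · rintro ⟨h1, h2⟩ i hi
    constructor
    · split <;> simp_all [h1]
    · split <;> simp_all [h2]
  · intro h
    constructor
    · intro i hi
      have := (h i (lt_of_lt_of_le hi (le_max_left n m))).1
      simpa [hi] using this
    · intro i hi
      have := (h i (lt_of_lt_of_le hi (le_max_right n m))).2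
      simpa [hi] using this

lemma generateFrom_boxes :
    (inferInstance : MeasurableSpace (ℕ → Fin d → ℤ)) = .generateFrom (boxes d) := by
  refine le_antisymm ?_ (MeasurableSpace.generateFrom_le ?_)
  · rw [show (inferInstance : MeasurableSpace (ℕ → Fin d → ℤ)) = MeasurableSpace.pi from rfl]
    refine iSup_le fun i => ?_
    intro t ht
    rcases ht with ⟨t', -, rfl⟩
    have : (fun u : ℕ → Fin d → ℤ => u i) ⁻¹' t'
        = box (i + 1) (fun j => if j = i then t' else Set.univ) := by
      ext u
      simp only [Set.mem_preimage, box, Set.mem_setOf_eq]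
      constructor
      · intro h j hj
        split <;> simp_all
      · intro h
        simpa using h i (Nat.lt_succ_self i)
    rw [this]
    exact MeasurableSpace.measurableSet_generateFrom ⟨_, _, rfl⟩
  · rintro t ⟨n, s, rfl⟩
    exact measurableSet_box n s

lemma univ_mem_boxes : Set.univ ∈ boxes d := ⟨0, fun _ => Set.univ, (box_zero _).symm⟩

/-- the head-tail decomposition map -/
def hdtl : (ℕ → Fin d → ℤ) → (Fin d → ℤ) × (ℕ → Fin d → ℤ) :=
  fun u => (u 0, fun n => u (n + 1))

lemma measurable_hdtl : Measurable (hdtl (d := d)) :=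
  (measurable_pi_apply 0).prodMk
    (measurable_pi_lambda _ (fun n => measurable_pi_apply (n + 1)))

lemma measurable_shf_uncurry :
    Measurable (fun q : (((Fin d → ℤ) → Bool) × (Fin d → ℤ)) => shf q.2 q.1) :=
  measurable_from_prod_countable_left fun z => measurable_shf z

lemma box_succ (s : ℕ → Set (Fin d → ℤ)) (n : ℕ) :
    box (n + 1) s = hdtl ⁻¹' ((s 0) ×ˢ box n (fun i => s (i + 1))) := by
  ext u
  simp only [box, Set.mem_setOf_eq, Set.mem_preimage, hdtl, Set.mem_prod]
  constructor
  · intro h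
    exact ⟨h 0 (Nat.succ_pos n), fun i hi => h (i + 1) (Nat.succ_lt_succ hi)⟩
  · rintro ⟨h0, h⟩ i hi
    cases i with
    | zero => exact h0
    | succ i => exact h i (Nat.lt_of_succ_lt_succ hi)

section Measures

variable (μ : Measure ((Fin d → ℤ) → Bool)) (κ : Measure (ℕ → Fin d → ℤ))
  (p : Measure (Fin d → ℤ))
  [IsProbabilityMeasure μ] [IsProbabilityMeasure κ] [IsProbabilityMeasure p]

/-- values of an "iid" measure on boxes, from the head-tail decomposition -/
lemma box_val (hK2 : κ.map hdtl = p.prod κ) (n : ℕ) (s : ℕ → Set (Fin d → ℤ)) :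
    κ (box n s) = ∏ i ∈ Finset.range n, p (s i) := by
  induction n generalizing s with
  | zero => simp [box_zero]
  | succ n ih =>
    rw [box_succ, ← Measure.map_apply measurable_hdtl
      (MeasurableSet.of_discrete.prod (measurableSet_box _ _)), hK2,
      Measure.prod_prod, ih, Finset.prod_range_succ', mul_comm]

lemma prod_gen_pi :
    (inferInstance : MeasurableSpace (((Fin d → ℤ) → Bool) × (ℕ → Fin d → ℤ)))
      = .generateFrom (Set.image2 (· ×ˢ ·)
          {s : Set ((Fin d → ℤ) → Bool) | MeasurableSet s} (boxes d)) :=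
  (generateFrom_eq_prod MeasurableSpace.generateFrom_measurableSet generateFrom_boxes.symm
    isCountablySpanning_measurableSet
    ⟨fun _ => Set.univ, fun _ => univ_mem_boxes, Set.iUnion_const _⟩).symm

lemma prod_gen_pi' :
    (inferInstance : MeasurableSpace ((Fin d → ℤ) × (ℕ → Fin d → ℤ)))
      = .generateFrom (Set.image2 (· ×ˢ ·)
          {s : Set (Fin d → ℤ) | MeasurableSet s} (boxes d)) :=
  (generateFrom_eq_prod MeasurableSpace.generateFrom_measurableSet generateFrom_boxes.symm
    isCountablySpanning_measurableSet
    ⟨fun _ => Set.univ, fun _ => univ_mem_boxes, Set.iUnion_const _⟩).symm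

variable {μ κ p}

lemma mu_shift_preserving (hμinv : ∀ z, μ.map (shf z) = μ) (z : Fin d → ℤ) :
    MeasurePreserving (shf z) μ μ := ⟨measurable_shf z, hμinv z⟩

/-- the skew product preserves `μ.prod κ` -/
lemma skew_measurePreserving (hμinv : ∀ z, μ.map (shf z) = μ)
    (hK2 : κ.map hdtl = p.prod κ) :
    MeasurePreserving skew (μ.prod κ) (μ.prod κ) := by
  refine ⟨measurable_skew, ?_⟩
  refine (Measure.prod_eq (μ := μ) (ν := κ) fun s t hs ht => ?_).symm
  rw [Measure.map_apply measurable_skew (hs.prod ht)]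
  have hpre : skew ⁻¹' (s ×ˢ t) = {y : ((Fin d → ℤ) → Bool) × (ℕ → Fin d → ℤ) |
      shf (y.2 0) y.1 ∈ s ∧ (fun n => y.2 (n + 1)) ∈ t} := rfl
  have hmeas : MeasurableSet (skew ⁻¹' (s ×ˢ t)) := measurable_skew (hs.prod ht)
  rw [Measure.prod_apply hmeas]
  have hslice : ∀ f, κ (Prod.mk f ⁻¹' (skew ⁻¹' (s ×ˢ t)))
      = p {z | shf z f ∈ s} * κ t := by
    intro f
    have : Prod.mk f ⁻¹' (skew ⁻¹' (s ×ˢ t))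
        = hdtl ⁻¹' ({z | shf z f ∈ s} ×ˢ t) := by
      ext u; simp [skew, hdtl, Set.mem_prod]
    rw [this, ← Measure.map_apply measurable_hdtl (MeasurableSet.of_discrete.prod ht), hK2,
      Measure.prod_prod]
  calc ∫⁻ f, κ (Prod.mk f ⁻¹' (skew ⁻¹' (s ×ˢ t))) ∂μ
      = ∫⁻ f, p {z | shf z f ∈ s} * κ t ∂μ := by
        exact lintegral_congr hslice
    _ = (∫⁻ f, p {z | shf z f ∈ s} ∂μ) * κ t := by
        rw [← lintegral_mul_const]
        exact measurable_measure_prodMk_left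
          (measurable_shf_uncurry hs :
            MeasurableSet {q : (((Fin d → ℤ) → Bool) × (Fin d → ℤ)) | shf q.2 q.1 ∈ s})
    _ = (∫⁻ f, ∫⁻ z, (s.indicator (fun _ => (1 : ℝ≥0∞))) (shf z f) ∂p ∂μ) * κ t := by
        congr 1
        refine lintegral_congr fun f => ?_
        rw [show (fun z => (s.indicator (fun _ => (1 : ℝ≥0∞))) (shf z f))
            = Set.indicator {z | shf z f ∈ s} (fun _ => (1 : ℝ≥0∞)) from ?_]
        · rw [lintegral_indicator MeasurableSet.of_discrete]
          simp
        · funext z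
          by_cases hz : shf z f ∈ s <;>
            simp [Set.indicator_apply, hz, Set.mem_setOf_eq]
    _ = (∫⁻ z, ∫⁻ f, (s.indicator (fun _ => (1 : ℝ≥0∞))) (shf z f) ∂μ ∂p) * κ t := by
        congr 1
        refine lintegral_lintegral_swap ?_
        exact ((measurable_const.indicator hs).comp measurable_shf_uncurry).aemeasurable
    _ = μ s * κ t := by
        congr 1
        have hkey : ∀ z : Fin d → ℤ,
            ∫⁻ f, (s.indicator (fun _ => (1 : ℝ≥0∞))) (shf z f) ∂μ = μ s := by
          intro z
          rw [← lintegral_map (measurable_const.indicator hs) (measurable_shf z), hμinv z,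
            lintegral_indicator hs]
          simp
        simp [hkey]

/-- a slice formula -/
lemma slice_formula (I : Set (((Fin d → ℤ) → Bool) × (ℕ → Fin d → ℤ)))
    (hI : MeasurableSet I) (s : Set ((Fin d → ℤ) → Bool)) (hs : MeasurableSet s)
    (W : Set (ℕ → Fin d → ℤ)) (hW : MeasurableSet W) :
    (μ.prod κ) (I ∩ s ×ˢ W)
      = ∫⁻ f in s, κ (Prod.mk f ⁻¹' (I ∩ Set.univ ×ˢ W)) ∂μ := by
  rw [Measure.prod_apply (hI.inter (hs.prod hW)), ← lintegral_indicator hs]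
  refine lintegral_congr fun f => ?_
  by_cases hf : f ∈ s
  · rw [Set.indicator_of_mem hf]
    congr 1
    ext u
    simp [Set.mem_prod, hf]
  · rw [Set.indicator_of_notMem hf]
    have : Prod.mk f ⁻¹' (I ∩ s ×ˢ W) = ∅ := by
      ext u; simp [Set.mem_prod, hf]
    simp [this]

/-- **Key ergodicity lemma** (Kakutani): any skew-invariant set is trivial. -/
lemma key_ergodic (hμinv : ∀ z, μ.map (shf z) = μ)
    (hK2 : κ.map hdtl = p.prod κ)
    (z₀ : Fin d → ℤ) (hp0 : p {z₀} ≠ 0) (herg : Ergodic (shf z₀) μ)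
    (I : Set (((Fin d → ℤ) → Bool) × (ℕ → Fin d → ℤ)))
    (hI : MeasurableSet I) (hinv : skew ⁻¹' I = I) :
    (μ.prod κ) I = 0 ∨ (μ.prod κ) I = 1 := by
  set ν := μ.prod κ with hν
  set Ψ : ((Fin d → ℤ) → Bool) → ℝ≥0∞ := fun f => κ (Prod.mk f ⁻¹' I) with hΨdef
  have hΨm : Measurable Ψ := measurable_measure_prodMk_left hI
  have hΨ1 : ∀ f, Ψ f ≤ 1 := fun f => prob_le_one
  have hΨtop : ∀ f, Ψ f ≠ ⊤ := fun f => (lt_of_le_of_lt (hΨ1 f) ENNReal.one_lt_top).ne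
  set ψ : ((Fin d → ℤ) → Bool) → ℝ := fun f => (Ψ f).toReal with hψdef
  have hψm : Measurable ψ := hΨm.ennreal_toReal
  have hψ0 : ∀ f, 0 ≤ ψ f := fun f => ENNReal.toReal_nonneg
  have hψ1 : ∀ f, ψ f ≤ 1 := fun f => by
    simpa using ENNReal.toReal_mono (by simp) (hΨ1 f)
  have hψabs : ∀ f, |ψ f| ≤ 1 := fun f => abs_le.2 ⟨by linarith [hψ0 f], hψ1 f⟩
  -- Step A : harmonicity of Ψ
  have stepA : ∀ f, Ψ f = ∫⁻ z, Ψ (shf z f) ∂p := by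
    intro f
    have h1 : Prod.mk f ⁻¹' I = hdtl ⁻¹'
        ((fun q : (Fin d → ℤ) × (ℕ → Fin d → ℤ) => (shf q.1 f, q.2)) ⁻¹' I) := by
      conv_lhs => rw [← hinv]
      rfl
    have hGm : MeasurableSet
        ((fun q : (Fin d → ℤ) × (ℕ → Fin d → ℤ) => (shf q.1 f, q.2)) ⁻¹' I) :=
      (((Measurable.of_discrete (f := fun z => shf z f)).comp
        measurable_fst).prodMk measurable_snd) hI
    rw [show Ψ f = κ (Prod.mk f ⁻¹' I) from rfl, h1,
      ← Measure.map_apply measurable_hdtl hGm, hK2, Measure.prod_apply hGm]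
    rfl
  have stepA' : ∀ f, ψ f = ∫ z, ψ (shf z f) ∂p := by
    intro f
    have h2 : ∫ z, ψ (shf z f) ∂p = (∫⁻ z, Ψ (shf z f) ∂p).toReal := by
      refine integral_toReal ?_ ?_
      · exact (hΨm.comp Measurable.of_discrete).aemeasurable
      · exact ae_of_all _ fun z => lt_of_le_of_lt (hΨ1 _) ENNReal.one_lt_top
    rw [h2, ← stepA f]
  -- integrability helper
  have hbd : ∀ (g : (((Fin d → ℤ) → Bool)) → ℝ), Measurable g → (∀ f, |g f| ≤ 1) →
      Integrable g μ := fun g hg hb =>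
    (integrable_const (1 : ℝ)).mono' hg.aestronglyMeasurable (ae_of_all _ hb)
  set Q : ℝ := ∫ f, ψ f ^ 2 ∂μ with hQdef
  have hsq_z : ∀ z, ∫ f, ψ (shf z f) ^ 2 ∂μ = Q := by
    intro z
    calc ∫ f, ψ (shf z f) ^ 2 ∂μ
        = ∫ g, ψ g ^ 2 ∂(μ.map (shf z)) :=
          (integral_map (measurable_shf z).aemeasurable
            ((hψm.pow_const 2).aestronglyMeasurable)).symm
      _ = Q := by rw [hμinv z]
  set R : (Fin d → ℤ) → ℝ := fun z => ∫ f, ψ f * ψ (shf z f) ∂μ with hRdef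
  have hFm : Measurable (fun q : ((Fin d → ℤ) × (((Fin d → ℤ) → Bool))) =>
      ψ q.2 * ψ (shf q.1 q.2)) :=
    (hψm.comp measurable_snd).mul
      (hψm.comp (measurable_shf_uncurry.comp measurable_swap))
  have hFb : ∀ q : ((Fin d → ℤ) × (((Fin d → ℤ) → Bool))),
      |ψ q.2 * ψ (shf q.1 q.2)| ≤ 1 := by
    intro q
    rw [abs_mul]
    exact mul_le_one₀ (hψabs _) (abs_nonneg _) (hψabs _)
  have hFint : Integrable (Function.uncurry fun z f => ψ f * ψ (shf z f)) (p.prod μ) :=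
    (integrable_const (1 : ℝ)).mono' hFm.aestronglyMeasurable (ae_of_all _ hFb)
  have hR : ∫ z, R z ∂p = Q := by
    rw [hRdef]
    rw [integral_integral_swap hFint]
    have : ∀ f, ∫ z, ψ f * ψ (shf z f) ∂p = ψ f ^ 2 := by
      intro f
      rw [integral_const_mul, ← stepA' f]
      ring
    rw [hQdef]
    exact integral_congr_ae (ae_of_all _ this)
  have hRb : ∀ z, |R z| ≤ 1 := by
    intro z
    have := norm_integral_le_of_norm_le_const (μ := μ)
      (f := fun f => ψ f * ψ (shf z f)) (C := 1)
      (ae_of_all _ fun f => by rw [Real.norm_eq_abs]; exact hFb (z, f))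
    simpa using this
  have hRm : Measurable R := by
    have h := (hFm.stronglyMeasurable.integral_prod_right' :
      StronglyMeasurable fun z : Fin d → ℤ => ∫ f, ψ f * ψ (shf z f) ∂μ)
    exact h.measurable
  have hRint : Integrable R p :=
    (integrable_const (1 : ℝ)).mono' hRm.aestronglyMeasurable (ae_of_all _ hRb)
  -- the defect function
  set D : (Fin d → ℤ) → ℝ := fun z => ∫ f, (ψ f - ψ (shf z f)) ^ 2 ∂μ with hDdef
  have hint1 : Integrable (fun f => ψ f ^ 2) μ :=
    hbd _ (hψm.pow_const 2) (fun f => by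
      rw [abs_le]
      constructor
      · nlinarith [sq_nonneg (ψ f)]
      · nlinarith [hψ0 f, hψ1 f])
  have hint2 : ∀ z, Integrable (fun f => ψ f * ψ (shf z f)) μ := fun z =>
    hbd _ ((hψm).mul (hψm.comp (measurable_shf z))) (fun f => hFb (z, f))
  have hint3 : ∀ z, Integrable (fun f => ψ (shf z f) ^ 2) μ := fun z =>
    hbd _ ((hψm.comp (measurable_shf z)).pow_const 2) (fun f => by
      rw [abs_le]
      constructor
      · nlinarith [sq_nonneg (ψ (shf z f))]
      · nlinarith [hψ0 (shf z f), hψ1 (shf z f)])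
  have hD : ∀ z, D z = 2 * Q - 2 * R z := by
    intro z
    have hexp : ∀ f, (ψ f - ψ (shf z f)) ^ 2
        = ψ f ^ 2 - 2 * (ψ f * ψ (shf z f)) + ψ (shf z f) ^ 2 := fun f => by ring
    have h12 : Integrable (fun f => ψ f ^ 2 - 2 * (ψ f * ψ (shf z f))) μ :=
      hint1.sub ((hint2 z).const_mul 2)
    rw [hDdef]
    simp only [hexp]
    rw [integral_add h12 (hint3 z), integral_sub hint1 ((hint2 z).const_mul 2),
      integral_const_mul, hsq_z z]
    rw [show ∫ f, ψ f ^ 2 ∂μ = Q from rfl]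
    ring
  have hDnn : ∀ z, 0 ≤ D z := fun z => integral_nonneg fun f => sq_nonneg _
  have hDint : Integrable D p := by
    have : D = fun z => 2 * Q - 2 * R z := funext hD
    rw [this]
    exact (integrable_const (2 * Q)).sub (hRint.const_mul 2)
  have hDzero : ∫ z, D z ∂p = 0 := by
    calc ∫ z, D z ∂p = ∫ z, (2 * Q - 2 * R z) ∂p := integral_congr_ae (ae_of_all _ hD)
      _ = 2 * Q - 2 * Q := by
          have e2 : Integrable (fun z => 2 * R z) p := hRint.const_mul 2
          rw [integral_sub (integrable_const _) e2, integral_const, integral_const_mul, hR]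
          simp
      _ = 0 := by ring
  have hDae : ∀ᵐ z ∂p, D z = 0 :=
    (integral_eq_zero_iff_of_nonneg hDnn hDint).mp hDzero
  have hDz0 : D z₀ = 0 := by
    by_contra hne
    have hsub : {z₀} ⊆ {z | ¬ D z = 0} := by
      intro z hz
      rw [Set.mem_singleton_iff] at hz
      subst hz
      exact hne
    have : p {z₀} = 0 :=
      le_antisymm (le_trans (measure_mono hsub) (le_of_eq (ae_iff.mp hDae))) zero_le
    exact hp0 this
  have hψinv : (ψ ∘ shf z₀) =ᵐ[μ] ψ := by
    have h0 : ∀ᵐ f ∂μ, (ψ f - ψ (shf z₀ f)) ^ 2 = 0 := by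
      have := (integral_eq_zero_iff_of_nonneg
        (fun f => sq_nonneg (ψ f - ψ (shf z₀ f)))
        (hbd _ ((hψm.sub (hψm.comp (measurable_shf z₀))).pow_const 2)
          (fun f => by
            rw [abs_le]
            constructor
            · nlinarith [sq_nonneg (ψ f - ψ (shf z₀ f))]
            · nlinarith [hψ0 f, hψ1 f, hψ0 (shf z₀ f), hψ1 (shf z₀ f)]))).mp hDz0
      exact this
    refine h0.mono fun f hf => ?_
    have := pow_eq_zero_iff (n := 2) (by norm_num) |>.mp hf
    have := sub_eq_zero.mp this
    simp only [Function.comp_apply]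
    linarith
  obtain ⟨c, hc⟩ := herg.ae_eq_const_of_ae_eq_comp₀ hψm.nullMeasurable hψinv
  set cE : ℝ≥0∞ := ENNReal.ofReal c with hcinf
  have hΨc : ∀ᵐ f ∂μ, Ψ f = cE := by
    refine hc.mono fun f hf => ?_
    rw [← ENNReal.ofReal_toReal (hΨtop f)]
    rw [show (Ψ f).toReal = ψ f from rfl, hf]
    rfl
  have hνI : ν I = cE := by
    rw [hν, Measure.prod_apply hI]
    calc ∫⁻ f, κ (Prod.mk f ⁻¹' I) ∂μ = ∫⁻ _, cE ∂μ := lintegral_congr_ae hΨc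
      _ = cE := by simp
  -- main induction
  have main : ∀ n (s : Set (((Fin d → ℤ) → Bool))), MeasurableSet s →
      ∀ t : ℕ → Set (Fin d → ℤ),
      ν (I ∩ s ×ˢ box n t) = cE * (μ s * ∏ i ∈ Finset.range n, p (t i)) := by
    intro n
    induction n with
    | zero =>
      intro s hs t
      rw [box_zero, slice_formula I hI s hs _ MeasurableSet.univ]
      have heq : ∀ f, κ (Prod.mk f ⁻¹' (I ∩ Set.univ ×ˢ Set.univ)) = Ψ f := by
        intro f
        congr 1
        ext u
        simp
      calc ∫⁻ f in s, κ (Prod.mk f ⁻¹' (I ∩ Set.univ ×ˢ Set.univ)) ∂μ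
          = ∫⁻ f in s, Ψ f ∂μ := lintegral_congr heq
        _ = ∫⁻ _ in s, cE ∂μ := lintegral_congr_ae (ae_restrict_of_ae hΨc)
        _ = cE * μ s := by rw [setLIntegral_const]
        _ = cE * (μ s * ∏ i ∈ Finset.range 0, p (t i)) := by simp
    | succ n ih =>
      intro s hs t
      set t' : ℕ → Set (Fin d → ℤ) := fun i => t (i + 1) with ht'def
      set Φn : (((Fin d → ℤ) → Bool)) → ℝ≥0∞ :=
        fun g => κ (Prod.mk g ⁻¹' (I ∩ Set.univ ×ˢ box n t')) with hΦdef
      have hΦm : Measurable Φn :=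
        measurable_measure_prodMk_left
          (hI.inter (MeasurableSet.univ.prod (measurableSet_box n t')))
      -- inner slice identity
      have hslice : ∀ f, κ (Prod.mk f ⁻¹' (I ∩ Set.univ ×ˢ box (n + 1) t))
          = ∫⁻ z in t 0, Φn (shf z f) ∂p := by
        intro f
        have hGm : MeasurableSet
            (((fun q : (Fin d → ℤ) × (ℕ → Fin d → ℤ) => (shf q.1 f, q.2)) ⁻¹' I)
              ∩ (t 0) ×ˢ box n t') :=
          ((((Measurable.of_discrete (f := fun z => shf z f)).comp
            measurable_fst).prodMk measurable_snd) hI).inter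
            (MeasurableSet.of_discrete.prod (measurableSet_box n t'))
        have h1 : Prod.mk f ⁻¹' (I ∩ Set.univ ×ˢ box (n + 1) t)
            = hdtl ⁻¹' (((fun q : (Fin d → ℤ) × (ℕ → Fin d → ℤ) => (shf q.1 f, q.2)) ⁻¹' I)
                ∩ (t 0) ×ˢ box n t') := by
          conv_lhs => rw [← hinv]
          ext u
          simp only [Set.mem_preimage, Set.mem_inter_iff, Set.mem_prod, Set.mem_univ,
            true_and, hdtl, skew]
          constructor
          · rintro ⟨hi, hb⟩
            have hb' : u 0 ∈ t 0 ∧ (fun k => u (k + 1)) ∈ box n t' := by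
              have := box_succ t n
              rw [this] at hb
              exact hb
            exact ⟨hi, hb'.1, hb'.2⟩
          · rintro ⟨hi, h0, hb⟩
            refine ⟨hi, ?_⟩
            rw [box_succ t n]
            exact ⟨h0, hb⟩
        rw [h1, ← Measure.map_apply measurable_hdtl hGm, hK2, Measure.prod_apply hGm]
        have h2 : ∀ z, κ (Prod.mk z ⁻¹'
            (((fun q : (Fin d → ℤ) × (ℕ → Fin d → ℤ) => (shf q.1 f, q.2)) ⁻¹' I)
              ∩ (t 0) ×ˢ box n t'))
            = Set.indicator (t 0) (fun z => Φn (shf z f)) z := by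
          intro z
          by_cases hz : z ∈ t 0
          · rw [Set.indicator_of_mem hz]
            congr 1
            ext w
            simp [Set.mem_prod, hz]
          · rw [Set.indicator_of_notMem hz]
            have : Prod.mk z ⁻¹'
                (((fun q : (Fin d → ℤ) × (ℕ → Fin d → ℤ) => (shf q.1 f, q.2)) ⁻¹' I)
                  ∩ (t 0) ×ˢ box n t') = ∅ := by
              ext w
              simp [Set.mem_prod, hz]
            simp [this]
        rw [lintegral_congr h2, lintegral_indicator MeasurableSet.of_discrete]
      -- rewrite LHS, swap integrals
      rw [slice_formula I hI s hs _ (measurableSet_box (n + 1) t),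
        lintegral_congr fun f => hslice f]
      have hswap : ∫⁻ f in s, ∫⁻ z in t 0, Φn (shf z f) ∂p ∂μ
          = ∫⁻ z in t 0, ∫⁻ f in s, Φn (shf z f) ∂μ ∂p := by
        refine lintegral_lintegral_swap ?_
        have hunc : (Function.uncurry fun (f : ((Fin d → ℤ) → Bool)) (z : Fin d → ℤ) =>
            Φn (shf z f))
            = fun q : (((Fin d → ℤ) → Bool) × (Fin d → ℤ)) => Φn (shf q.2 q.1) := rfl
        rw [hunc]
        exact (hΦm.comp measurable_shf_uncurry).aemeasurable
      rw [hswap]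
      -- compute the inner integral for each z
      have hinner : ∀ z, ∫⁻ f in s, Φn (shf z f) ∂μ
          = cE * (μ s * ∏ i ∈ Finset.range n, p (t' i)) := by
        intro z
        set s' : Set (((Fin d → ℤ) → Bool)) := shf (-z) ⁻¹' s with hs'def
        have hs' : MeasurableSet s' := (measurable_shf (-z)) hs
        have hμs' : μ s' = μ s := by
          rw [hs'def, ← Measure.map_apply (measurable_shf (-z)) hs, hμinv (-z)]
        have hd1 : ∀ f, Set.indicator s (fun f => Φn (shf z f)) f
            = (Set.indicator s' Φn) (shf z f) := by
          intro f
          have hmem : f ∈ s ↔ shf z f ∈ s' := by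
            rw [hs'def, Set.mem_preimage, shf_shf]
            simp [shf_zero]
          by_cases hf : f ∈ s
          · rw [Set.indicator_of_mem hf, Set.indicator_of_mem (hmem.mp hf)]
          · rw [Set.indicator_of_notMem hf,
              Set.indicator_of_notMem (fun hmem' => hf (hmem.mpr hmem'))]
        calc ∫⁻ f in s, Φn (shf z f) ∂μ
            = ∫⁻ f, Set.indicator s (fun f => Φn (shf z f)) f ∂μ := by
              rw [lintegral_indicator hs]
          _ = ∫⁻ f, (Set.indicator s' Φn) (shf z f) ∂μ := lintegral_congr hd1
          _ = ∫⁻ g, Set.indicator s' Φn g ∂(μ.map (shf z)) :=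
              (lintegral_map (hΦm.indicator hs') (measurable_shf z)).symm
          _ = ∫⁻ g in s', Φn g ∂μ := by rw [hμinv z, lintegral_indicator hs']
          _ = ν (I ∩ s' ×ˢ box n t') :=
              (slice_formula I hI s' hs' _ (measurableSet_box n t')).symm
          _ = cE * (μ s' * ∏ i ∈ Finset.range n, p (t' i)) := ih s' hs' t'
          _ = cE * (μ s * ∏ i ∈ Finset.range n, p (t' i)) := by rw [hμs']
      rw [lintegral_congr fun z => hinner z, setLIntegral_const,
        Finset.prod_range_succ']
      ring
  -- conclude by a π-system argument
  have hext : ν.restrict I = cE • ν := by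
    refine ext_of_generate_finite _ prod_gen_pi
      (IsPiSystem.prod MeasurableSpace.isPiSystem_measurableSet isPiSystem_boxes) ?_ ?_
    · rintro u ⟨s, hs, tb, ⟨n, t, rfl⟩, rfl⟩
      have hs' : MeasurableSet s := hs
      rw [Measure.restrict_apply (hs'.prod (measurableSet_box n t)), Set.inter_comm,
        main n s hs' t, Measure.smul_apply, smul_eq_mul, hν, Measure.prod_prod,
        box_val _ _ hK2 n t]
    · rw [Measure.restrict_apply_univ, Measure.smul_apply, smul_eq_mul, measure_univ,
        mul_one, hνI]
  have hfix : ν I = cE * ν I := by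
    have h1 : ν.restrict I I = ν I := by
      rw [Measure.restrict_apply hI, Set.inter_self]
    have h2 : (cE • ν) I = cE * ν I := by
      rw [Measure.smul_apply, smul_eq_mul]
    calc ν I = (ν.restrict I) I := h1.symm
      _ = (cE • ν) I := by rw [hext]
      _ = cE * ν I := h2
  rw [← hνI] at hfix
  rcases eq_or_ne (ν I) 0 with h0 | h0
  · exact Or.inl h0
  · right
    have htop : ν I ≠ ⊤ := (lt_of_le_of_lt prob_le_one ENNReal.one_lt_top).ne
    exact (ENNReal.mul_eq_left h0 htop).mp hfix.symm

end Measures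

end RWErg

open RWErg in
/-- **A random walk hits an ergodic positive-density set infinitely often.**
Let `𝓑` be a random subset of `ℤ^d` (encoded by its indicator field `B : Ω → (ℤ^d → Bool)`)
whose law is invariant under every translation of `ℤ^d`, ergodic with respect to the
translation by each standard basis vector, and almost surely non-empty.  Let `(X_n)` be a
nearest-neighbor random walk started at `0` with step distribution satisfying `p(e₁) > 0`,
independent of `𝓑`.  Then almost surely `X_n ∈ 𝓑` for infinitely many `n`. -/
theorem random_walk_hits_ergodic_set
    {Ω : Type*} [MeasureSpace Ω] [IsProbabilityMeasure (ℙ : Measure Ω)]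
    (d : ℕ) (hd : 0 < d)
    (B : Ω → (Fin d → ℤ) → Bool)
    (hBmeas : Measurable B)
    -- law invariant under every translation
    (hBinv : ∀ z : Fin d → ℤ,
      (ℙ : Measure Ω).map (fun ω => fun x => B ω (x + z)) = (ℙ : Measure Ω).map B)
    -- ergodic with respect to the translation by each standard basis vector
    (hBerg : ∀ j : Fin d,
      Ergodic (fun f : (Fin d → ℤ) → Bool => fun x => f (x + Pi.single j 1))
        ((ℙ : Measure Ω).map B))
    -- 𝓑 is almost surely non-empty
    (hBne : ∀ᵐ ω ∂(ℙ : Measure Ω), ∃ x, B ω x = true)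
    -- i.i.d. nearest-neighbor steps
    (ζ : ℕ → Ω → (Fin d → ℤ))
    (hζmeas : ∀ n, Measurable (ζ n))
    (hζindep : iIndepFun ζ ℙ)
    (hζident : ∀ n, IdentDistrib (ζ n) (ζ 0) ℙ ℙ)
    (hζnn : ∀ᵐ ω ∂(ℙ : Measure Ω),
      ∃ j : Fin d, ζ 0 ω = Pi.single j 1 ∨ ζ 0 ω = -Pi.single j 1)
    -- p(e₁) > 0
    (hpe1 : 0 < ℙ {ω | ζ 0 ω = Pi.single (⟨0, hd⟩ : Fin d) 1})
    -- the walk is independent of 𝓑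
    (hindepB : IndepFun B (fun ω => fun n => ζ n ω) ℙ) :
    ∀ᵐ ω ∂(ℙ : Measure Ω),
      {n : ℕ | B ω (∑ i ∈ Finset.range n, ζ i ω) = true}.Infinite := by
  classical
  set μ : Measure ((Fin d → ℤ) → Bool) := (ℙ : Measure Ω).map B with hμdef
  set Z : Ω → ℕ → Fin d → ℤ := fun ω n => ζ n ω with hZdef
  have hZmeas : Measurable Z := measurable_pi_lambda _ (fun n => hζmeas n)
  set κ : Measure (ℕ → Fin d → ℤ) := (ℙ : Measure Ω).map Z with hκdef
  set p : Measure (Fin d → ℤ) := (ℙ : Measure Ω).map (ζ 0) with hpdef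
  haveI : IsProbabilityMeasure μ := Measure.isProbabilityMeasure_map hBmeas.aemeasurable
  haveI : IsProbabilityMeasure κ := Measure.isProbabilityMeasure_map hZmeas.aemeasurable
  haveI : IsProbabilityMeasure p := Measure.isProbabilityMeasure_map (hζmeas 0).aemeasurable
  -- invariance of μ under shifts
  have hμinv : ∀ z, μ.map (shf z) = μ := by
    intro z
    rw [hμdef, Measure.map_map (measurable_shf z) hBmeas]
    exact hBinv z
  -- values of κ on boxes
  have hpval : ∀ (i : ℕ) (t : Set (Fin d → ℤ)), (ℙ : Measure Ω) (ζ i ⁻¹' t) = p t := by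
    intro i t
    rw [hpdef, Measure.map_apply (hζmeas 0) MeasurableSet.of_discrete]
    exact (hζident i).measure_mem_eq MeasurableSet.of_discrete
  have hbox : ∀ (n : ℕ) (t : ℕ → Set (Fin d → ℤ)),
      κ (box n t) = ∏ i ∈ Finset.range n, p (t i) := by
    intro n t
    rw [hκdef, Measure.map_apply hZmeas (measurableSet_box n t)]
    have hset : Z ⁻¹' box n t = ⋂ i ∈ Finset.range n, ζ i ⁻¹' (t i) := by
      ext ω
      simp [box, hZdef]
    rw [hset, hζindep.measure_inter_preimage_eq_mul (Finset.range n)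
      (fun i _ => MeasurableSet.of_discrete)]
    exact Finset.prod_congr rfl fun i _ => hpval i (t i)
  -- the head-tail decomposition of κ
  have hK2 : κ.map hdtl = p.prod κ := by
    haveI : IsProbabilityMeasure (κ.map hdtl) :=
      Measure.isProbabilityMeasure_map measurable_hdtl.aemeasurable
    refine ext_of_generate_finite _ prod_gen_pi'
      (IsPiSystem.prod MeasurableSpace.isPiSystem_measurableSet isPiSystem_boxes) ?_ ?_
    · rintro u ⟨s0, hs0, tb, ⟨n, t, rfl⟩, rfl⟩
      have hs0' : MeasurableSet s0 := hs0
      rw [Measure.map_apply measurable_hdtl (hs0'.prod (measurableSet_box n t)),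
        Measure.prod_prod, hbox n t]
      have hpre : hdtl ⁻¹' (s0 ×ˢ box n t)
          = box (n + 1) (fun i => Nat.casesOn i s0 t)
          := (box_succ (fun i => Nat.casesOn i s0 t) n).symm
      rw [hpre, hbox (n + 1) _, Finset.prod_range_succ']
      rw [mul_comm]
      rfl
    · simp [measure_univ]
  -- positivity of the one-site marginal
  have hmeas0 : MeasurableSet {f : (Fin d → ℤ) → Bool | f 0 = true} := by
    have h : {f : (Fin d → ℤ) → Bool | f 0 = true}
        = (fun f : (Fin d → ℤ) → Bool => f 0) ⁻¹' {true} := by ext f; simp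
    rw [h]
    exact (measurable_pi_apply 0) (measurableSet_singleton true)
  have hBfull : μ {f | ∃ x, f x = true} = 1 := by
    have hmeasE : MeasurableSet {f : (Fin d → ℤ) → Bool | ∃ x, f x = true} := by
      have : {f : (Fin d → ℤ) → Bool | ∃ x, f x = true}
          = ⋃ x, (fun f : (Fin d → ℤ) → Bool => f x) ⁻¹' {true} := by
        ext f; simp
      rw [this]
      exact MeasurableSet.iUnion fun x => (measurable_pi_apply x) (measurableSet_singleton true)
    rw [hμdef, Measure.map_apply hBmeas hmeasE]
    rw [← prob_compl_eq_zero_iff (hBmeas hmeasE)]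
    rw [ae_iff] at hBne
    have hcc : (B ⁻¹' {f | ∃ x, f x = true})ᶜ = {ω | ¬ ∃ x, B ω x = true} := by
      ext ω; simp
    rw [hcc]
    exact hBne
  have hA1 : μ {f : (Fin d → ℤ) → Bool | f 0 = true} ≠ 0 := by
    intro h0
    have hx : ∀ x : Fin d → ℤ, μ {f : (Fin d → ℤ) → Bool | f x = true} = 0 := by
      intro x
      have hset : {f : (Fin d → ℤ) → Bool | f x = true}
          = shf x ⁻¹' {f | f 0 = true} := by
        ext f
        simp [shf]
      rw [hset, ← Measure.map_apply (measurable_shf x) hmeas0, hμinv x]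
      exact h0
    have hz : μ {f : (Fin d → ℤ) → Bool | ∃ x, f x = true} = 0 := by
      refine measure_mono_null ?_ (measure_iUnion_null fun x : Fin d → ℤ => hx x)
      intro f hf
      obtain ⟨x, hfx⟩ := hf
      exact Set.mem_iUnion.mpr ⟨x, hfx⟩
    rw [hBfull] at hz
    exact one_ne_zero hz
  -- the hitting set and its invariance
  set ν : Measure (((Fin d → ℤ) → Bool) × (ℕ → Fin d → ℤ)) := μ.prod κ with hνdef
  set A : Set (((Fin d → ℤ) → Bool) × (ℕ → Fin d → ℤ)) := {y | y.1 0 = true} with hAdef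
  have hAmeas : MeasurableSet A := by
    have h : A = (fun y : (((Fin d → ℤ) → Bool) × (ℕ → Fin d → ℤ)) => y.1 0) ⁻¹' {true} := by
      ext y; simp [hAdef]
    rw [h]
    exact ((measurable_pi_apply 0).comp measurable_fst) (measurableSet_singleton true)
  have hmp : MeasurePreserving skew ν ν := skew_measurePreserving hμinv hK2
  set I₀ : Set (((Fin d → ℤ) → Bool) × (ℕ → Fin d → ℤ)) :=
    ⋂ N : ℕ, ⋃ n : ℕ, ⋃ _ : N ≤ n, skew^[n] ⁻¹' A with hI₀def
  have hI₀meas : MeasurableSet I₀ :=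
    MeasurableSet.iInter fun N => MeasurableSet.iUnion fun n =>
      MeasurableSet.iUnion fun _ => (measurable_skew.iterate n) hAmeas
  have hmemI₀ : ∀ y, y ∈ I₀ ↔ ∃ᶠ n in atTop, skew^[n] y ∈ A := by
    intro y
    simp only [hI₀def, Set.mem_iInter, Set.mem_iUnion, Set.mem_preimage]
    rw [frequently_atTop]
    constructor
    · intro h N
      obtain ⟨n, hn, hmem⟩ := h N
      exact ⟨n, hn, hmem⟩
    · intro h N
      obtain ⟨n, hn, hmem⟩ := h N
      exact ⟨n, hn, hmem⟩
  have hinvI₀ : skew ⁻¹' I₀ = I₀ := by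
    ext y
    rw [Set.mem_preimage, hmemI₀, hmemI₀, frequently_atTop, frequently_atTop]
    constructor
    · intro h N
      obtain ⟨n, hn, hmem⟩ := h N
      rw [← Function.iterate_succ_apply] at hmem
      exact ⟨n + 1, le_trans hn (Nat.le_succ n), hmem⟩
    · intro h N
      obtain ⟨n, hn, hmem⟩ := h (N + 1)
      obtain ⟨m, rfl⟩ : ∃ m, n = m + 1 := ⟨n - 1, by omega⟩
      rw [Function.iterate_succ_apply] at hmem
      exact ⟨m, by omega, hmem⟩
  have hνA : ν A ≠ 0 := by
    have hAeq : ν A = μ {f : (Fin d → ℤ) → Bool | f 0 = true} := by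
      have : A = {f : (Fin d → ℤ) → Bool | f 0 = true} ×ˢ (Set.univ : Set (ℕ → Fin d → ℤ)) := by
        ext y
        simp [hAdef, Set.mem_prod]
      rw [this, hνdef, Measure.prod_prod, measure_univ, mul_one]
    rw [hAeq]
    exact hA1
  have hpoin : ∀ᵐ y ∂ν, y ∈ A → y ∈ I₀ := by
    have hcons : Conservative skew ν := hmp.conservative
    have := hcons.ae_mem_imp_frequently_image_mem hAmeas.nullMeasurableSet
    exact this.mono fun y h hy => (hmemI₀ y).mpr (h hy)
  have hνI₀pos : ν I₀ ≠ 0 := by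
    intro h0
    have h1 : ν (A \ I₀) = 0 := by
      rw [ae_iff] at hpoin
      refine measure_mono_null ?_ hpoin
      intro y hy
      simp only [Set.mem_setOf_eq, Classical.not_imp]
      exact ⟨hy.1, hy.2⟩
    have hle : ν A ≤ ν I₀ + ν (A \ I₀) := by
      refine le_trans (measure_mono ?_) (measure_union_le _ _)
      intro y hy
      by_cases h : y ∈ I₀
      · exact Or.inl h
      · exact Or.inr ⟨hy, h⟩
    rw [h0, h1] at hle
    simp only [add_zero, le_zero_iff] at hle
    exact hνA hle
  set z₀ : Fin d → ℤ := Pi.single (⟨0, hd⟩ : Fin d) 1 with hz₀def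
  have hp0 : p {z₀} ≠ 0 := by
    have hpz : p {z₀} = ℙ {ω | ζ 0 ω = z₀} := by
      rw [← hpval 0 {z₀}]
      congr 1
    rw [hpz]
    exact hpe1.ne'
  have herg : Ergodic (shf z₀) μ := hBerg ⟨0, hd⟩
  have htriv := key_ergodic hμinv hK2 z₀ hp0 herg I₀ hI₀meas hinvI₀
  have hνI₀ : ν I₀ = 1 := htriv.resolve_left hνI₀pos
  have haeI₀ : ∀ᵐ y ∂ν, y ∈ I₀ := by
    rw [ae_iff]
    have hcompl : ν I₀ᶜ = 0 := by
      rw [measure_compl hI₀meas (measure_ne_top _ _), hνI₀, measure_univ, tsub_self]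
    exact hcompl
  -- transfer back to Ω
  set Φ : Ω → (((Fin d → ℤ) → Bool) × (ℕ → Fin d → ℤ)) := fun ω => (B ω, Z ω) with hΦdef
  have hΦmeas : Measurable Φ := hBmeas.prodMk hZmeas
  have hlaw : (ℙ : Measure Ω).map Φ = ν := by
    rw [hνdef, hμdef, hκdef]
    exact (indepFun_iff_map_prod_eq_prod_map_map hBmeas.aemeasurable
      hZmeas.aemeasurable).mp hindepB
  have haeΩ : ∀ᵐ ω ∂(ℙ : Measure Ω), Φ ω ∈ I₀ := by
    have h := haeI₀
    rw [← hlaw] at h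
    exact (ae_map_iff hΦmeas.aemeasurable hI₀meas).mp h
  refine haeΩ.mono fun ω hω => ?_
  have hfreq : ∃ᶠ n in atTop, skew^[n] (Φ ω) ∈ A := (hmemI₀ _).mp hω
  have hiff : ∀ n, (skew^[n] (Φ ω) ∈ A) ↔ B ω (∑ i ∈ Finset.range n, ζ i ω) = true := by
    intro n
    rw [skew_iterate]
    show shf (∑ i ∈ Finset.range n, Z ω i) (B ω) 0 = true ↔ _
    simp [shf, hZdef]
  exact Nat.frequently_atTop_iff_infinite.mp (hfreq.mono fun n hn => (hiff n).mp hn)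
end

section
/- Abelian property: fix a configuration η and an instruction sequence at each site. If α and β are two legal toppling sequences for η, both contained in a finite set V ⊆ ℤ^d and both stabilizing η in V, then m_α(x) = m_β(x) for every x ∈ ℤ^d. -/
open Filter

/-! Definitions for the activated random walk toppling system on `ℤ^d`.

A configuration is a map `η : ℤ^d → ℕ ∪ {𝔰}`; we encode `ℕ ∪ {𝔰}` as `Option ℕ`,
where `some k` means `k` active particles at the site and `none` means a single
sleeping particle `𝔰`. -/

/-- Sites of the lattice `ℤ^d`. -/
abbrev Site (d : ℕ) := Fin d → ℤ

/-- A configuration: `some k` = `k` active particles, `none` = the sleeping state `𝔰`. -/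
abbrev Config (d : ℕ) := Site d → Option ℕ

/-- An instruction: either `sleep`, or `jump` to the nearest neighbor in direction
`±e_j` (`s = true` for `+e_j`, `s = false` for `−e_j`). -/
inductive Instr (d : ℕ) where
  | sleep : Instr d
  | jump (j : Fin d) (s : Bool) : Instr d
  deriving DecidableEq

/-- The nearest neighbor of `x` in direction `±e_j`. -/
def nbr {d : ℕ} (x : Site d) (j : Fin d) (s : Bool) : Site d :=
  x + (if s then (1 : ℤ) else -1) • Pi.single j 1

/-- A site is unstable when it holds at least one active particle. -/
def Unstable {d : ℕ} (η : Config d) (x : Site d) : Prop :=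
  ∃ k : ℕ, η x = some (k + 1)

/-- Add one particle at `y`: an arriving particle wakes up a sleeping particle
(`𝔰` becomes `2`). -/
def addParticle {d : ℕ} (η : Config d) (y : Site d) : Config d :=
  Function.update η y (match η y with
    | none => some 2
    | some m => some (m + 1))

/-- Apply a single instruction at the site `x`: a `sleep` instruction turns `1` into `𝔰`
and does nothing if there are at least `2` particles; a `jump` instruction moves one
active particle from `x` to the corresponding nearest neighbor. -/
def applyInstr {d : ℕ} (η : Config d) (x : Site d) : Instr d → Config d
  | Instr.sleep => if η x = some 1 then Function.update η x none else η
  | Instr.jump j s =>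
      addParticle
        (Function.update η x (match η x with
          | some (k + 1) => some k
          | o => o))
        (nbr x j s)

/-- Perform the topplings of the finite sequence `α` (a list of sites), in order, using for
each site the first unused instruction of its instruction sequence `τ`; `cnt x` records how
many instructions at `x` have already been used.  Returns the resulting configuration and
updated usage counts. -/
def toppleSeq {d : ℕ} (τ : Site d → ℕ → Instr d) :
    List (Site d) → Config d → (Site d → ℕ) → Config d × (Site d → ℕ)
  | [], η, cnt => (η, cnt)
  | x :: α, η, cnt =>
      toppleSeq τ α (applyInstr η x (τ x (cnt x))) (Function.update cnt x (cnt x + 1))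

/-- The toppling sequence `α` is legal for `(η, cnt)`: each successively toppled site is
unstable at the moment of its toppling. -/
def LegalSeq {d : ℕ} (τ : Site d → ℕ → Instr d) :
    List (Site d) → Config d → (Site d → ℕ) → Prop
  | [], _, _ => True
  | x :: α, η, cnt =>
      Unstable η x ∧
        LegalSeq τ α (applyInstr η x (τ x (cnt x))) (Function.update cnt x (cnt x + 1))

/-- `α` stabilizes `η` in `V`: after performing the topplings of `α` (starting from fresh
instruction counters), every site of `V` is stable. -/
def StabilizesIn {d : ℕ} (τ : Site d → ℕ → Instr d) (α : List (Site d)) (η : Config d)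
    (V : Finset (Site d)) : Prop :=
  ∀ x ∈ V, ¬ Unstable (toppleSeq τ α η (fun _ => 0)).1 x

/-- `m_α(x)`: the number of occurrences of the site `x` in the toppling sequence `α`. -/
def mCount {d : ℕ} (α : List (Site d)) (x : Site d) : ℕ := α.count x

lemma addParticle_apply {d : ℕ} (η : Config d) (y z : Site d) :
    addParticle η y z = if z = y then (match η y with
      | none => some 2 | some m => some (m + 1)) else η z := by
  simp [addParticle, Function.update_apply]

lemma nbr_ne {d : ℕ} (x : Site d) (j : Fin d) (s : Bool) : nbr x j s ≠ x := by
  intro h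
  have := congrFun h j
  simp [nbr, Pi.single_eq_same] at this
  rcases s with _ | _ <;> simp at this


lemma unstable_applyInstr {d : ℕ} {η : Config d} {x y : Site d} (hxy : x ≠ y)
    (hx : Unstable η x) (i : Instr d) : Unstable (applyInstr η y i) x := by
  obtain ⟨k, hk⟩ := hx
  cases i with
  | sleep =>
      refine ⟨k, ?_⟩
      simp only [applyInstr]
      split
      · rw [Function.update_of_ne hxy]; exact hk
      · exact hk
  | jump j s =>
      simp only [applyInstr, Unstable, addParticle_apply]
      by_cases hx' : x = nbr y j s
      · rw [if_pos hx', ← hx', Function.update_of_ne hxy, hk]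
        exact ⟨k + 1, rfl⟩
      · rw [if_neg hx', Function.update_of_ne hxy]
        exact ⟨k, hk⟩

set_option maxHeartbeats 2000000 in

lemma applyInstr_comm {d : ℕ} {η : Config d} {x y : Site d} (hxy : x ≠ y)
    (hx : Unstable η x) (hy : Unstable η y) (i j : Instr d) :
    applyInstr (applyInstr η x i) y j = applyInstr (applyInstr η y j) x i := by
  obtain ⟨k, hk⟩ := hx
  obtain ⟨m, hm⟩ := hy
  funext z
  cases i with
  | sleep => cases j with
    | sleep =>
      unfold applyInstr
      simp only [applyInstr, ite_apply, Function.update_apply, hk, hm]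
      split_ifs <;> (try simp only [Option.some.injEq, reduceCtorEq] at *) <;> (try subst_vars) <;> first | rfl | omega | (exact absurd rfl hxy) | (exact absurd ‹_› ‹_›) | grind | (simp_all; omega) | (simp_all; grind) | simp_all
    | jump j2 s2 =>
      have hny := nbr_ne y j2 s2
      rcases hv2 : η (nbr y j2 s2) with _ | n2
      all_goals unfold applyInstr
      all_goals simp only [applyInstr, ite_apply, addParticle_apply,
        Function.update_apply, hk, hm, hv2]
      all_goals split_ifs <;> (try simp only [Option.some.injEq, reduceCtorEq] at *) <;> (try subst_vars) <;> first | rfl | omega | (exact absurd rfl hxy) | (exact absurd ‹_› ‹_›) | grind | (simp_all; omega) | (simp_all; grind) | simp_all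
  | jump j1 s1 => cases j with
    | sleep =>
      have hnx := nbr_ne x j1 s1
      rcases hv1 : η (nbr x j1 s1) with _ | n1
      all_goals unfold applyInstr
      all_goals simp only [applyInstr, ite_apply, addParticle_apply,
        Function.update_apply, hk, hm, hv1]
      all_goals split_ifs <;> (try simp only [Option.some.injEq, reduceCtorEq] at *) <;> (try subst_vars) <;> first | rfl | omega | (exact absurd rfl hxy) | (exact absurd ‹_› ‹_›) | grind | (simp_all; omega) | (simp_all; grind) | simp_all
    | jump j2 s2 =>
      have hnx := nbr_ne x j1 s1
      have hny := nbr_ne y j2 s2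
      rcases hv1 : η (nbr x j1 s1) with _ | n1 <;>
      rcases hv2 : η (nbr y j2 s2) with _ | n2
      all_goals unfold applyInstr
      all_goals simp only [applyInstr, ite_apply, addParticle_apply,
        Function.update_apply, hk, hm, hv1, hv2]
      all_goals split_ifs <;> (try simp only [Option.some.injEq, reduceCtorEq] at *) <;> (try subst_vars) <;> first | rfl | omega | (exact absurd rfl hxy) | (exact absurd ‹_› ‹_›) | grind | (simp_all; omega) | (simp_all; grind) | simp_all
lemma unstable_toppleSeq {d : ℕ} (τ : Site d → ℕ → Instr d) {x : Site d} :
    ∀ (β : List (Site d)) (η : Config d) (cnt : Site d → ℕ), x ∉ β → Unstable η x →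
      Unstable (toppleSeq τ β η cnt).1 x
  | [], η, cnt, _, hx => hx
  | y :: β, η, cnt, hmem, hx => by
      have hxy : x ≠ y := fun h => hmem (h ▸ List.mem_cons_self (a := y) (l := β))
      exact unstable_toppleSeq τ β _ _ (fun h => hmem (List.mem_cons_of_mem _ h))
        (unstable_applyInstr hxy hx _)

lemma moveToFront {d : ℕ} (τ : Site d → ℕ → Instr d) (x : Site d) :
    ∀ (β₁ β₂ : List (Site d)) (η : Config d) (cnt : Site d → ℕ), x ∉ β₁ → Unstable η x →
      LegalSeq τ (β₁ ++ x :: β₂) η cnt →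
      LegalSeq τ (x :: (β₁ ++ β₂)) η cnt ∧
        toppleSeq τ (x :: (β₁ ++ β₂)) η cnt = toppleSeq τ (β₁ ++ x :: β₂) η cnt
  | [], β₂, η, cnt, _, _, hleg => ⟨hleg, rfl⟩
  | y :: β₁, β₂, η, cnt, hmem, hx, hleg => by
      have hxy : x ≠ y := fun h => hmem (h ▸ List.mem_cons_self (a := y) (l := β₁))
      obtain ⟨hy, hleg'⟩ := hleg
      have hx' : Unstable (applyInstr η y (τ y (cnt y))) x := unstable_applyInstr hxy hx _
      obtain ⟨ihleg, ihtop⟩ := moveToFront τ x β₁ β₂ _ _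
        (fun h => hmem (List.mem_cons_of_mem _ h)) hx' hleg'
      obtain ⟨-, ihleg'⟩ := ihleg
      have hcomm := applyInstr_comm hxy.symm hy hx (τ y (cnt y)) (τ x (cnt x))
      have hcnty : (Function.update cnt y (cnt y + 1)) x = cnt x :=
        Function.update_of_ne hxy _ _
      have hcntx : (Function.update cnt x (cnt x + 1)) y = cnt y :=
        Function.update_of_ne hxy.symm _ _
      have hcntc : Function.update (Function.update cnt y (cnt y + 1)) x
            ((Function.update cnt y (cnt y + 1)) x + 1)
          = Function.update (Function.update cnt x (cnt x + 1)) y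
            ((Function.update cnt x (cnt x + 1)) y + 1) := by
        rw [hcnty, hcntx, Function.update_comm hxy.symm]
      constructor
      · refine ⟨hx, ?_⟩
        show LegalSeq τ (y :: (β₁ ++ β₂)) _ _
        refine ⟨unstable_applyInstr hxy.symm hy _, ?_⟩
        rw [hcntx, ← hcomm, ← hcnty, ← hcntc] at *
        exact ihleg'
      · show toppleSeq τ (β₁ ++ β₂)
            (applyInstr (applyInstr η x (τ x (cnt x))) y
              (τ y (Function.update cnt x (cnt x + 1) y)))
            (Function.update (Function.update cnt x (cnt x + 1)) y
              (Function.update cnt x (cnt x + 1) y + 1))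
          = toppleSeq τ (β₁ ++ x :: β₂) (applyInstr η y (τ y (cnt y)))
              (Function.update cnt y (cnt y + 1))
        rw [← ihtop]
        show _ = toppleSeq τ (β₁ ++ β₂)
            (applyInstr (applyInstr η y (τ y (cnt y))) x
              (τ x (Function.update cnt y (cnt y + 1) x)))
            (Function.update (Function.update cnt y (cnt y + 1)) x
              (Function.update cnt y (cnt y + 1) x + 1))
        rw [hcntx, hcnty, hcomm, Function.update_comm hxy]

lemma exists_first_occ {d : ℕ} {x : Site d} :
    ∀ {β : List (Site d)}, x ∈ β → ∃ β₁ β₂, β = β₁ ++ x :: β₂ ∧ x ∉ β₁ := by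
  intro β hmem
  induction β with
  | nil => simp at hmem
  | cons y β ih =>
      by_cases hxy : x = y
      · exact ⟨[], β, by simp [hxy], by simp⟩
      · have hmem' : x ∈ β := by
          rcases List.mem_cons.1 hmem with h | h
          · exact absurd h hxy
          · exact h
        obtain ⟨β₁, β₂, h1, h2⟩ := ih hmem'
        exact ⟨y :: β₁, β₂, by simp [h1], by simp [hxy, h2]⟩

lemma count_le {d : ℕ} (τ : Site d → ℕ → Instr d) :
    ∀ (α β : List (Site d)) (η : Config d) (cnt : Site d → ℕ),
      LegalSeq τ α η cnt → LegalSeq τ β η cnt →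
      (∀ x ∈ α, ¬ Unstable (toppleSeq τ β η cnt).1 x) →
      ∀ z, α.count z ≤ β.count z
  | [], β, η, cnt, _, _, _, z => by simp
  | x :: α, β, η, cnt, hα, hβ, hstab, z => by
      obtain ⟨hx, hα'⟩ := hα
      have hxβ : x ∈ β := by
        by_contra hxβ
        exact hstab x (List.mem_cons_self (a := x) (l := α)) (unstable_toppleSeq τ β η cnt hxβ hx)
      obtain ⟨β₁, β₂, hsplit, hnot⟩ := exists_first_occ hxβ
      subst hsplit
      obtain ⟨hlegmov, htopmov⟩ := moveToFront τ x β₁ β₂ η cnt hnot hx hβ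
      obtain ⟨-, hlegmov'⟩ := hlegmov
      have ih := count_le τ α (β₁ ++ β₂) _ _ hα' hlegmov'
        (by
          intro w hw
          have : (toppleSeq τ (β₁ ++ β₂) (applyInstr η x (τ x (cnt x)))
              (Function.update cnt x (cnt x + 1))).1
              = (toppleSeq τ (β₁ ++ x :: β₂) η cnt).1 := by
            rw [← htopmov]; rfl
          rw [this]
          exact hstab w (List.mem_cons_of_mem _ hw)) z
      by_cases hzx : z = x <;>
        simp [List.count_cons, List.count_append, hzx] at ih ⊢ <;> omega

/-- **Abelian property.**  Fix a configuration `η` and an instruction sequence at each site.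
If `α` and `β` are two legal toppling sequences for `η`, both contained in a finite set
`V ⊆ ℤ^d` and both stabilizing `η` in `V`, then `m_α(x) = m_β(x)` for every `x ∈ ℤ^d`. -/
theorem abelian_property {d : ℕ} (τ : Site d → ℕ → Instr d) (η : Config d)
    (V : Finset (Site d)) (α β : List (Site d))
    (hαV : ∀ x ∈ α, x ∈ V) (hβV : ∀ x ∈ β, x ∈ V)
    (hα : LegalSeq τ α η (fun _ => 0)) (hβ : LegalSeq τ β η (fun _ => 0))
    (hαstab : StabilizesIn τ α η V) (hβstab : StabilizesIn τ β η V) :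
    ∀ x : Site d, mCount α x = mCount β x := by
  intro x
  have h1 := count_le τ α β η (fun _ => 0) hα hβ
    (fun w hw => hβstab w (hαV w hw)) x
  have h2 := count_le τ β α η (fun _ => 0) hβ hα
    (fun w hw => hαstab w (hβV w hw)) x
  exact le_antisymm h1 h2
end

section
/- Monotonicity of odometers: fix a configuration η and an instruction sequence at each site. Let V ⊆ V' be finite subsets of ℤ^d, let α be a legal toppling sequence for η contained in V that stabilizes η in V, and let α' be a legal toppling sequence for η contained in V' that stabilizes η in V'. Then m_α(x) ≤ m_{α'}(x) for every x ∈ ℤ^d. In particular, writing m_V for the common odometer of stabilization in V, one has m_V ≤ m_{V'} pointwise, and for any nondecreasing sequence of finite sets V_n with ∪_n V_n = ℤ^d the limit m = lim_n m_{V_n} exists in (ℕ ∪ {∞})^{ℤ^d} and does not depend on the chosen exhaustion. -/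
open Filter

namespace ARW

variable {d : ℕ}

/-- value after a particle arrives -/
def bump : Option ℕ → Option ℕ
  | none => some 2
  | some m => some (m + 1)

lemma addParticle_eq (η : Config d) (y : Site d) :
    addParticle η y = Function.update η y (bump (η y)) := by
  cases hy : η y <;> simp [addParticle, bump, hy]

lemma nbr_ne (x : Site d) (j : Fin d) (s : Bool) : nbr x j s ≠ x := by
  intro h
  have := congrFun h j
  simp [nbr, Pi.single_apply] at this
  cases s <;> simp_all

lemma applyInstr_sleep_eq (η : Config d) (x : Site d) :
    applyInstr η x Instr.sleep = if η x = some 1 then Function.update η x none else η := rfl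

lemma applyInstr_jump_eq {η : Config d} {x : Site d} {a : ℕ} (hx : η x = some (a + 1))
    (j : Fin d) (s : Bool) :
    applyInstr η x (Instr.jump j s) =
      Function.update (Function.update η x (some a)) (nbr x j s)
        (bump (η (nbr x j s))) := by
  have h := nbr_ne x j s
  simp only [applyInstr, hx, addParticle_eq, Function.update_of_ne h]

lemma unstable_persist {η : Config d} {x y : Site d} (hxy : y ≠ x)
    (hx : Unstable η x) (i : Instr d) : Unstable (applyInstr η y i) x := by
  obtain ⟨k, hk⟩ := hx
  cases i with
  | sleep =>
      rw [applyInstr_sleep_eq]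
      split_ifs with h
      · exact ⟨k, by rw [Function.update_of_ne (Ne.symm hxy), hk]⟩
      · exact ⟨k, hk⟩
  | jump j s =>
      obtain ⟨b, hb⟩ : ∃ b, η y = some (b + 1) ∨ η y = none ∨ η y = some 0 := by
        cases hy : η y with
        | none => exact ⟨0, Or.inr (Or.inl rfl)⟩
        | some m => cases m with
          | zero => exact ⟨0, Or.inr (Or.inr rfl)⟩
          | succ b => exact ⟨b, Or.inl rfl⟩
      rw [show applyInstr η y (Instr.jump j s) = addParticle
        (Function.update η y (match η y with | some (k+1) => some k | o => o)) (nbr y j s) from rfl,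
        addParticle_eq]
      set g := Function.update η y (match η y with | some (k+1) => some k | o => o) with hg
      have hgx : g x = η x := Function.update_of_ne (Ne.symm hxy) _ _
      by_cases hz : nbr y j s = x
      · rw [← hz]
        refine ⟨k + 1, ?_⟩
        rw [Function.update_self, hz, hgx, hk]
        rfl
      · exact ⟨k, by rw [Function.update_of_ne (Ne.symm hz), hgx, hk]⟩

end ARW
namespace ARW
variable {d : ℕ}

lemma comm_sleep_sleep {η : Config d} {x y : Site d} (hxy : x ≠ y) :
    applyInstr (applyInstr η y Instr.sleep) x Instr.sleep
      = applyInstr (applyInstr η x Instr.sleep) y Instr.sleep := by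
  simp only [applyInstr_sleep_eq]
  by_cases h1 : η x = some 1 <;> by_cases h2 : η y = some 1 <;>
    simp [h1, h2, Function.update_of_ne hxy, Function.update_of_ne (Ne.symm hxy),
      Function.update_comm hxy]

lemma comm_sleep_jump {η : Config d} {x y : Site d} (hxy : x ≠ y)
    (hx : Unstable η x) (hy : Unstable η y) (j : Fin d) (s : Bool) :
    applyInstr (applyInstr η y (Instr.jump j s)) x Instr.sleep
      = applyInstr (applyInstr η x Instr.sleep) y (Instr.jump j s) := by
  obtain ⟨a, ha⟩ := hx
  obtain ⟨b, hb⟩ := hy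
  have hzy : nbr y j s ≠ y := nbr_ne y j s
  set z := nbr y j s with hz
  rw [applyInstr_jump_eq hb j s]
  have hSy : (applyInstr η x Instr.sleep) y = some (b + 1) := by
    rw [applyInstr_sleep_eq]; split_ifs with h
    · rw [Function.update_of_ne (Ne.symm hxy), hb]
    · exact hb
  rw [applyInstr_jump_eq hSy j s, applyInstr_sleep_eq]
  by_cases hzx : z = x
  · subst hzx
    have hvx : (Function.update (Function.update η y (some b)) z (bump (η z))) z
        = bump (η z) := Function.update_self _ _ _
    rw [if_neg (by rw [hvx, ha]; simp [bump])]
    rw [applyInstr_sleep_eq]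
    split_ifs with h1
    · funext u
      simp only [Function.update_apply]
      split_ifs <;> simp_all [bump]
    · rfl
  · rw [show (Function.update (Function.update η y (some b)) z (bump (η z))) x = η x by
      rw [Function.update_of_ne (Ne.symm hzx), Function.update_of_ne hxy]]
    rw [applyInstr_sleep_eq]
    split_ifs with h1
    · funext u
      simp only [Function.update_apply]
      split_ifs <;> simp_all [bump]
    · rfl

end ARW
namespace ARW
variable {d : ℕ}

/-- value after one active particle leaves -/
def dec : Option ℕ → Option ℕ
  | some (k + 1) => some k
  | o => o

@[simp] lemma dec_some_succ (n : ℕ) : dec (some (n + 1)) = some n := rfl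
@[simp] lemma bump_some (n : ℕ) : bump (some n) = some (n + 1) := rfl
@[simp] lemma bump_none : bump (none : Option ℕ) = some 2 := rfl

/-- move one particle from `x` to `w` (as an update operation). -/
def moveTo (η : Config d) (x w : Site d) : Config d :=
  Function.update (Function.update η x (dec (η x))) w (bump (η w))

lemma applyInstr_jump_eq' {η : Config d} {x : Site d} (hx : Unstable η x)
    (j : Fin d) (s : Bool) :
    applyInstr η x (Instr.jump j s) = moveTo η x (nbr x j s) := by
  obtain ⟨a, ha⟩ := hx
  rw [applyInstr_jump_eq ha j s, moveTo, ha, dec_some_succ]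

lemma moveTo_comm {η : Config d} {x y w z : Site d}
    (hxy : x ≠ y) (hwx : w ≠ x) (hzy : z ≠ y)
    (hx : Unstable η x) (hy : Unstable η y) :
    moveTo (moveTo η y z) x w = moveTo (moveTo η x w) y z := by
  obtain ⟨a, ha⟩ := hx
  obtain ⟨b, hb⟩ := hy
  funext u
  simp only [moveTo, Function.update_apply]
  split_ifs <;> subst_vars <;> simp_all

lemma comm_jump_jump {η : Config d} {x y : Site d} (hxy : x ≠ y)
    (hx : Unstable η x) (hy : Unstable η y) (jx : Fin d) (sx : Bool)
    (jy : Fin d) (sy : Bool) :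
    applyInstr (applyInstr η y (Instr.jump jy sy)) x (Instr.jump jx sx)
      = applyInstr (applyInstr η x (Instr.jump jx sx)) y (Instr.jump jy sy) := by
  rw [applyInstr_jump_eq' (unstable_persist (Ne.symm hxy) hx _) jx sx,
    applyInstr_jump_eq' (unstable_persist hxy hy _) jy sy,
    applyInstr_jump_eq' hy jy sy, applyInstr_jump_eq' hx jx sx]
  exact moveTo_comm hxy (nbr_ne x jx sx) (nbr_ne y jy sy) ⟨_, (hx.choose_spec)⟩ ⟨_, hy.choose_spec⟩

lemma applyInstr_comm {η : Config d} {x y : Site d} (hxy : x ≠ y)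
    (hx : Unstable η x) (hy : Unstable η y) (i j : Instr d) :
    applyInstr (applyInstr η y j) x i = applyInstr (applyInstr η x i) y j := by
  cases i with
  | sleep =>
      cases j with
      | sleep => exact comm_sleep_sleep hxy
      | jump jy sy => exact comm_sleep_jump hxy hx hy jy sy
  | jump jx sx =>
      cases j with
      | sleep => exact (comm_sleep_jump (Ne.symm hxy) hy hx jx sx).symm
      | jump jy sy => exact comm_jump_jump hxy hx hy jx sx jy sy

end ARW
namespace ARW
variable {d : ℕ}

lemma unstable_persist_seq (τ : Site d → ℕ → Instr d) :
    ∀ (γ : List (Site d)) (η : Config d) (cnt : Site d → ℕ) {x : Site d},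
      x ∉ γ → Unstable η x → Unstable (toppleSeq τ γ η cnt).1 x := by
  intro γ
  induction γ with
  | nil => intro η cnt x _ hx; exact hx
  | cons y γ' ih =>
      intro η cnt x hxγ hx
      have hxy : y ≠ x := fun h => hxγ (h ▸ (List.mem_cons_self : y ∈ y :: γ'))
      exact ih _ _ (fun h => hxγ (List.mem_cons_of_mem _ h)) (unstable_persist hxy hx _)

lemma exists_split_first {α : Type*} [DecidableEq α] {a : α} :
    ∀ {l : List α}, a ∈ l → ∃ s t, l = s ++ a :: t ∧ a ∉ s := by
  intro l
  induction l with
  | nil => simp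
  | cons b l ih =>
      intro h
      by_cases hab : a = b
      · exact ⟨[], l, by simp [hab], by simp⟩
      · obtain ⟨s, t, rfl, hns⟩ := ih (by
          rcases List.mem_cons.mp h with h' | h'
          · exact absurd h' hab
          · exact h')
        exact ⟨b :: s, t, rfl, by simp [hab, hns]⟩

lemma toppleSeq_swap (τ : Site d → ℕ → Instr d) (δ : List (Site d)) (x : Site d) :
    ∀ (γ : List (Site d)) (η : Config d) (cnt : Site d → ℕ),
      x ∉ γ → Unstable η x → LegalSeq τ (γ ++ x :: δ) η cnt →
      LegalSeq τ (x :: (γ ++ δ)) η cnt ∧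
        toppleSeq τ (x :: (γ ++ δ)) η cnt = toppleSeq τ (γ ++ x :: δ) η cnt := by
  intro γ
  induction γ with
  | nil => intro η cnt _ hx hleg; exact ⟨hleg, rfl⟩
  | cons y γ' ih =>
      intro η cnt hxγ hx hleg
      have hxy : x ≠ y := fun h => hxγ (h ▸ (List.mem_cons_self : y ∈ y :: γ'))
      have hxγ' : x ∉ γ' := fun h => hxγ (List.mem_cons_of_mem _ h)
      obtain ⟨hy, hleg'⟩ := hleg
      have hx1 : Unstable (applyInstr η y (τ y (cnt y))) x :=
        unstable_persist (Ne.symm hxy) hx _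
      obtain ⟨ihleg, ihtop⟩ :=
        ih (applyInstr η y (τ y (cnt y))) (Function.update cnt y (cnt y + 1)) hxγ' hx1 hleg'
      have e1 : (Function.update cnt y (cnt y + 1)) x = cnt x :=
        Function.update_of_ne hxy _ _
      have e2 : (Function.update cnt x (cnt x + 1)) y = cnt y :=
        Function.update_of_ne (Ne.symm hxy) _ _
      have h2 := ihleg.2
      rw [e1] at h2
      rw [applyInstr_comm hxy hx hy (τ x (cnt x)) (τ y (cnt y))] at h2
      rw [Function.update_comm (Ne.symm hxy)] at h2
      constructor
      · refine ⟨hx, unstable_persist hxy hy _, ?_⟩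
        rw [e2]
        exact h2
      · -- toppleSeq equality
        have ht := ihtop
        simp only [toppleSeq, List.cons_append] at ht ⊢
        rw [e2, ← applyInstr_comm hxy hx hy (τ x (cnt x)) (τ y (cnt y)),
          Function.update_comm hxy]
        rw [e1] at ht
        exact ht

lemma key_lemma (τ : Site d → ℕ → Instr d) :
    ∀ (β : List (Site d)) (σ : List (Site d)) (η : Config d) (cnt : Site d → ℕ),
      LegalSeq τ β η cnt → LegalSeq τ σ η cnt →
      (∀ z ∈ β, ¬ Unstable (toppleSeq τ σ η cnt).1 z) →
      ∀ x : Site d, β.count x ≤ σ.count x := by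
  intro β
  induction β with
  | nil => intro σ η cnt _ _ _ x; simp
  | cons p β' ih =>
      intro σ η cnt hβ hσ hstab x
      obtain ⟨hp, hβ'⟩ := hβ
      have hpσ : p ∈ σ := by
        by_contra hns
        exact hstab p List.mem_cons_self (unstable_persist_seq τ σ η cnt hns hp)
      obtain ⟨γ, δ, rfl, hpγ⟩ := exists_split_first hpσ
      obtain ⟨hql, hqt⟩ := toppleSeq_swap τ δ p γ η cnt hpγ hp hσ
      have hσ' := hql.2
      simp only [toppleSeq] at hqt
      have hstab' : ∀ z ∈ β',
          ¬ Unstable (toppleSeq τ (γ ++ δ) (applyInstr η p (τ p (cnt p)))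
            (Function.update cnt p (cnt p + 1))).1 z := by
        intro z hz
        rw [hqt]
        exact hstab z (List.mem_cons_of_mem _ hz)
      have h := ih (γ ++ δ) _ _ hβ' hσ' hstab' x
      simp only [List.count_cons, List.count_append] at h ⊢
      split_ifs <;> omega

end ARW
namespace ARW
variable {d : ℕ}

lemma count_le_of_stab (τ : Site d → ℕ → Instr d) (η : Config d)
    (β σ : List (Site d)) (W : Finset (Site d))
    (hβ : LegalSeq τ β η (fun _ => 0)) (hσ : LegalSeq τ σ η (fun _ => 0))
    (hβW : ∀ z ∈ β, z ∈ W) (hσstab : StabilizesIn τ σ η W) :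
    ∀ x : Site d, mCount β x ≤ mCount σ x :=
  key_lemma τ β σ η (fun _ => 0) hβ hσ (fun z hz => hσstab z (hβW z hz))

lemma finset_subset_exhaustion (W : ℕ → Finset (Site d))
    (hmono : ∀ n, W n ⊆ W (n + 1)) (hexh : ∀ x : Site d, ∃ n, x ∈ W n)
    (S : Finset (Site d)) : ∃ m, S ⊆ W m := by
  classical
  have hmono' : Monotone W := monotone_nat_of_le_succ hmono
  induction S using Finset.induction with
  | empty => exact ⟨0, Finset.empty_subset _⟩
  | @insert a S ha ih =>
      obtain ⟨m, hm⟩ := ih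
      obtain ⟨k, hk⟩ := hexh a
      exact ⟨max m k, Finset.insert_subset (hmono' (le_max_right m k) hk)
        (hm.trans (hmono' (le_max_left m k)))⟩

end ARW
/-- **Monotonicity of odometers.**  Fix a configuration `η` and an instruction sequence at
each site.  If `V ⊆ V'` are finite, `α` is a legal toppling sequence for `η` contained in
`V` stabilizing `η` in `V`, and `α'` is a legal toppling sequence for `η` contained in `V'`
stabilizing `η` in `V'`, then `m_α(x) ≤ m_{α'}(x)` for every `x` (so `m_V ≤ m_{V'}`
pointwise).  Moreover, for any two nondecreasing exhaustions `(V_n)`, `(W_n)` of `ℤ^d` with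
associated legal stabilizing sequences `(α_n)`, `(β_n)`, the (monotone) limits agree in
`(ℕ ∪ {∞})^{ℤ^d}`:  `⨆ n, m_{α_n}(x) = ⨆ n, m_{β_n}(x)`; i.e. the limit odometer
`m = lim_n m_{V_n}` exists and does not depend on the chosen exhaustion. -/
theorem odometer_monotonicity {d : ℕ} (τ : Site d → ℕ → Instr d) (η : Config d)
    -- monotonicity for a fixed pair V ⊆ V'
    (V V' : Finset (Site d)) (hVV' : V ⊆ V')
    (α α' : List (Site d))
    (hαV : ∀ x ∈ α, x ∈ V) (hα'V' : ∀ x ∈ α', x ∈ V')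
    (hα : LegalSeq τ α η (fun _ => 0)) (hα' : LegalSeq τ α' η (fun _ => 0))
    (hαstab : StabilizesIn τ α η V) (hα'stab : StabilizesIn τ α' η V')
    -- two nondecreasing exhaustions of ℤ^d with legal stabilizing toppling sequences
    (Vseq Wseq : ℕ → Finset (Site d))
    (hVmono : ∀ n, Vseq n ⊆ Vseq (n + 1)) (hWmono : ∀ n, Wseq n ⊆ Wseq (n + 1))
    (hVexh : ∀ x : Site d, ∃ n, x ∈ Vseq n) (hWexh : ∀ x : Site d, ∃ n, x ∈ Wseq n)
    (A B : ℕ → List (Site d))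
    (hAV : ∀ n, ∀ x ∈ A n, x ∈ Vseq n) (hBW : ∀ n, ∀ x ∈ B n, x ∈ Wseq n)
    (hAleg : ∀ n, LegalSeq τ (A n) η (fun _ => 0))
    (hBleg : ∀ n, LegalSeq τ (B n) η (fun _ => 0))
    (hAstab : ∀ n, StabilizesIn τ (A n) η (Vseq n))
    (hBstab : ∀ n, StabilizesIn τ (B n) η (Wseq n)) :
    (∀ x : Site d, mCount α x ≤ mCount α' x)
    ∧
    (∀ x : Site d,
      (⨆ n : ℕ, (mCount (A n) x : ℕ∞)) = ⨆ n : ℕ, (mCount (B n) x : ℕ∞)) := by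
    constructor
    · intro x
      exact ARW.count_le_of_stab τ η α α' V' hα hα'
        (fun z hz => hVV' (hαV z hz)) hα'stab x
    · intro x
      apply le_antisymm
      · apply iSup_le
        intro n
        obtain ⟨m, hm⟩ := ARW.finset_subset_exhaustion Wseq hWmono hWexh (Vseq n)
        have h := ARW.count_le_of_stab τ η (A n) (B m) (Wseq m) (hAleg n) (hBleg m)
          (fun z hz => hm (hAV n z hz)) (hBstab m) x
        exact le_trans (Nat.cast_le.mpr h)
          (le_iSup (fun m => ((mCount (B m) x : ℕ∞))) m)
      · apply iSup_le
        intro n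
        obtain ⟨m, hm⟩ := ARW.finset_subset_exhaustion Vseq hVmono hVexh (Wseq n)
        have h := ARW.count_le_of_stab τ η (B n) (A m) (Vseq m) (hBleg n) (hAleg m)
          (fun z hz => hm (hBW n z hz)) (hAstab m) x
        exact le_trans (Nat.cast_le.mpr h)
          (le_iSup (fun m => ((mCount (A m) x : ℕ∞))) m)
end
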